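/- arXiv:2401.01048 — 5 statements merged into one kernel-verified Lean document; each statement's English description precedes it below -/
import Mathlib

section
/- (Two-level change of measure for multi-view learning) Let V ≥ 1 and for each view v let P_v, Q_v be probability measures on a hypothesis space H_v with Q_v ≪ P_v, and let π, ρ be probability measures on the set of views {1,…,V} with ρ ≪ π. For any measurable φ with suitable integrability, E_{v∼ρ} E_{h∼Q_v}[φ(v,h)] ≤ E_{v∼ρ}[KL(Q_v ‖ P_v)] + KL(ρ ‖ π) + ln( E_{v∼π} E_{h∼P_v}[e^{φ(v,h)}] ). -/
open MeasureTheory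

private lemma one_level_com {H : Type*} [MeasurableSpace H] (μ ν : Measure H)
    [IsProbabilityMeasure μ] [IsProbabilityMeasure ν] (hac : μ ≪ ν)
    (f : H → ℝ) (hf : Measurable f)
    (hexp : Integrable (fun h => Real.exp (f h)) ν)
    (hfint : Integrable f μ)
    (hllr : Integrable (fun h => Real.log ((μ.rnDeriv ν h).toReal)) μ) :
    ∫ h, f h ∂μ ≤ (∫ h, Real.log ((μ.rnDeriv ν h).toReal) ∂μ)
      + Real.log (∫ h, Real.exp (f h) ∂ν) := by
  classical
  have hllr_eq : (fun h => Real.log ((μ.rnDeriv ν h).toReal)) = llr μ ν := rfl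
  set A : ℝ := ∫ h, Real.exp (f h) ∂ν with hAdef
  set g : H → ℝ := fun h => f h - llr μ ν h with hgdef
  have hg_int : Integrable g μ := hfint.sub (hllr_eq ▸ hllr)
  -- pointwise identification of exp ∘ g
  have h1 : ∀ᵐ h ∂μ, Real.exp (g h) = Real.exp (f h) * (ν.rnDeriv μ h).toReal := by
    filter_upwards [exp_neg_llr hac] with h hh
    rw [hgdef]
    simp only [sub_eq_add_neg, Real.exp_add]
    rw [hh]
  -- lintegral bound
  have h2 : ∫⁻ h, ENNReal.ofReal (Real.exp (g h)) ∂μ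
      ≤ ∫⁻ h, ENNReal.ofReal (Real.exp (f h)) ∂ν := by
    calc ∫⁻ h, ENNReal.ofReal (Real.exp (g h)) ∂μ
        = ∫⁻ h, ENNReal.ofReal (Real.exp (f h) * (ν.rnDeriv μ h).toReal) ∂μ := by
          refine lintegral_congr_ae ?_
          filter_upwards [h1] with h hh using by rw [hh]
      _ ≤ ∫⁻ h, (ν.rnDeriv μ h) * ENNReal.ofReal (Real.exp (f h)) ∂μ := by
          refine lintegral_mono fun h => ?_
          rw [ENNReal.ofReal_mul (Real.exp_pos _).le, mul_comm]
          exact mul_le_mul_left ENNReal.ofReal_toReal_le _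
      _ = ∫⁻ h, ENNReal.ofReal (Real.exp (f h)) ∂(μ.withDensity (ν.rnDeriv μ)) := by
          rw [lintegral_withDensity_eq_lintegral_mul μ (Measure.measurable_rnDeriv ν μ)
            (hf.exp.ennreal_ofReal)]
          rfl
      _ ≤ ∫⁻ h, ENNReal.ofReal (Real.exp (f h)) ∂ν :=
          lintegral_mono' (Measure.withDensity_rnDeriv_le ν μ) le_rfl
  have hexpA : ∫⁻ h, ENNReal.ofReal (Real.exp (f h)) ∂ν = ENNReal.ofReal A :=
    (ofReal_integral_eq_lintegral_ofReal hexp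
      (Filter.Eventually.of_forall fun h => (Real.exp_pos _).le)).symm
  -- integrability of exp ∘ g
  have hgexp : Integrable (fun h => Real.exp (g h)) μ := by
    refine ⟨((hf.sub (measurable_llr μ ν)).exp).aestronglyMeasurable, ?_⟩
    rw [hasFiniteIntegral_iff_ofReal (Filter.Eventually.of_forall fun h => (Real.exp_pos _).le)]
    exact lt_of_le_of_lt (h2.trans hexpA.le) ENNReal.ofReal_lt_top
  set m : ℝ := ∫ h, g h ∂μ with hmdef
  -- key Jensen-type pointwise inequality
  have key : ∀ h, g h - m + 1 ≤ Real.exp (g h) * Real.exp (-m) := fun h => by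
    have h1 := Real.add_one_le_exp (g h - m)
    rw [sub_eq_add_neg, Real.exp_add] at h1
    linarith
  have hint1 : ∫ h, (g h - m + 1) ∂μ = 1 := by
    have e1 : Integrable (fun h => g h - m) μ := hg_int.sub (integrable_const m)
    have e2 : (∫ h, (g h - m) ∂μ) = (∫ h, g h ∂μ) - m := by
      rw [integral_sub hg_int (integrable_const m), integral_const]
      simp
    rw [integral_add e1 (integrable_const 1), e2, integral_const]
    simp [hmdef]
  have h3 : (1:ℝ) ≤ (∫ h, Real.exp (g h) ∂μ) * Real.exp (-m) := by
    calc (1:ℝ) = ∫ h, (g h - m + 1) ∂μ := hint1.symm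
      _ ≤ ∫ h, Real.exp (g h) * Real.exp (-m) ∂μ :=
          integral_mono ((hg_int.sub (integrable_const m)).add (integrable_const 1))
            (hgexp.mul_const _) key
      _ = (∫ h, Real.exp (g h) ∂μ) * Real.exp (-m) := integral_mul_const _ _
  have hI : ∫ h, Real.exp (g h) ∂μ ≤ A := by
    have hAnn : 0 ≤ A := integral_nonneg fun h => (Real.exp_pos _).le
    rw [integral_eq_lintegral_of_nonneg_ae
      (Filter.Eventually.of_forall fun h => (Real.exp_pos _).le)
      ((show Measurable g from hf.sub (measurable_llr μ ν)).exp).aestronglyMeasurable]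
    calc (∫⁻ h, ENNReal.ofReal (Real.exp (g h)) ∂μ).toReal
        ≤ (ENNReal.ofReal A).toReal :=
          ENNReal.toReal_mono ENNReal.ofReal_ne_top (h2.trans hexpA.le)
      _ = A := ENNReal.toReal_ofReal hAnn
  have hexpm : Real.exp m ≤ A := by
    have h4 : Real.exp m ≤ ∫ h, Real.exp (g h) ∂μ := by
      rw [Real.exp_neg, ← div_eq_mul_inv, le_div_iff₀ (Real.exp_pos m), one_mul] at h3
      exact h3
    exact h4.trans hI
  have hApos : 0 < A := lt_of_lt_of_le (Real.exp_pos m) hexpm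
  have hm_le : m ≤ Real.log A := (Real.le_log_iff_exp_le hApos).mpr hexpm
  have hsplit : m = (∫ h, f h ∂μ) - ∫ h, llr μ ν h ∂μ := by
    rw [hmdef, hgdef]
    exact integral_sub hfint (hllr_eq ▸ hllr)
  rw [hllr_eq]
  linarith [hm_le, hsplit.symm.le]

private lemma discrete_dv (V : ℕ) (π ρ A : Fin V → ℝ) (hπ0 : ∀ v, 0 ≤ π v)
    (hρ0 : ∀ v, 0 ≤ ρ v) (hρ1 : ∑ v, ρ v = 1) (hacρ : ∀ v, π v = 0 → ρ v = 0)
    (hA : ∀ v, 0 < A v) :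
    ∑ v, ρ v * Real.log (A v)
      ≤ (∑ v, ρ v * Real.log (ρ v / π v)) + Real.log (∑ v, π v * A v) := by
  classical
  set m : ℝ := ∑ v, ρ v * (Real.log (A v) - Real.log (ρ v / π v)) with hmdef
  have hm : m = (∑ v, ρ v * Real.log (A v)) - ∑ v, ρ v * Real.log (ρ v / π v) := by
    rw [hmdef, ← Finset.sum_sub_distrib]
    exact Finset.sum_congr rfl fun v _ => by ring
  have key : ∀ v, ρ v * (Real.log (A v) - Real.log (ρ v / π v) - m + 1)
      ≤ π v * A v * Real.exp (-m) := by
    intro v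
    rcases eq_or_lt_of_le (hρ0 v) with h0 | hρpos
    · rw [← h0, zero_mul]
      exact mul_nonneg (mul_nonneg (hπ0 v) (hA v).le) (Real.exp_pos _).le
    · have hπpos : 0 < π v := by
        rcases eq_or_lt_of_le (hπ0 v) with h0' | h
        · exfalso; have := hacρ v h0'.symm; linarith
        · exact h
      have hratio : 0 < ρ v / π v := div_pos hρpos hπpos
      have h1 := Real.add_one_le_exp (Real.log (A v) - Real.log (ρ v / π v) - m)
      have h2 : Real.exp (Real.log (A v) - Real.log (ρ v / π v) - m)
          = (A v / (ρ v / π v)) * Real.exp (-m) := by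
        rw [sub_eq_add_neg (Real.log (A v) - Real.log (ρ v / π v)) m, Real.exp_add,
          Real.exp_sub, Real.exp_log (hA v), Real.exp_log hratio]
      rw [h2] at h1
      have h3 : ρ v * ((A v / (ρ v / π v)) * Real.exp (-m)) = π v * A v * Real.exp (-m) := by
        field_simp
      calc ρ v * (Real.log (A v) - Real.log (ρ v / π v) - m + 1)
          ≤ ρ v * ((A v / (ρ v / π v)) * Real.exp (-m)) :=
            mul_le_mul_of_nonneg_left h1 hρpos.le
        _ = π v * A v * Real.exp (-m) := h3
  have hsum : ∑ v, ρ v * (Real.log (A v) - Real.log (ρ v / π v) - m + 1) = 1 := by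
    have e : ∀ v, ρ v * (Real.log (A v) - Real.log (ρ v / π v) - m + 1)
        = ρ v * (Real.log (A v) - Real.log (ρ v / π v)) - m * ρ v + ρ v := fun v => by ring
    rw [Finset.sum_congr rfl fun v _ => e v, Finset.sum_add_distrib,
      Finset.sum_sub_distrib, ← Finset.mul_sum, hρ1, mul_one, ← hmdef]
    ring
  have h3 : (1:ℝ) ≤ (∑ v, π v * A v) * Real.exp (-m) := by
    rw [← hsum, Finset.sum_mul]
    exact Finset.sum_le_sum fun v _ => key v
  have hexpm : Real.exp m ≤ ∑ v, π v * A v := by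
    rw [Real.exp_neg, ← div_eq_mul_inv, le_div_iff₀ (Real.exp_pos m), one_mul] at h3
    exact h3
  have hS : 0 < ∑ v, π v * A v := lt_of_lt_of_le (Real.exp_pos m) hexpm
  have := (Real.le_log_iff_exp_le hS).mpr hexpm
  linarith [hm.symm.le]

/-- Two-level change of measure inequality for multi-view learning:
views are `{1,…,V}` (encoded as `Fin V`), with hyper-prior `π`, hyper-posterior `ρ`
(probability vectors on the views), per-view priors `P v`, posteriors `Q v`
on the hypothesis space `H`. Then
`E_{v∼ρ} E_{h∼Q v}[φ v h] ≤ E_{v∼ρ}[KL(Q v‖P v)] + KL(ρ‖π) + ln(E_{v∼π} E_{h∼P v}[e^{φ v h}])`. -/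
theorem two_level_change_of_measure {H : Type*} [MeasurableSpace H]
    (V : ℕ) (hV : 1 ≤ V)
    (π ρ : Fin V → ℝ) (hπ0 : ∀ v, 0 ≤ π v) (hρ0 : ∀ v, 0 ≤ ρ v)
    (hπ1 : ∑ v, π v = 1) (hρ1 : ∑ v, ρ v = 1)
    (hacρ : ∀ v, π v = 0 → ρ v = 0)
    (P Q : Fin V → Measure H)
    [∀ v, IsProbabilityMeasure (P v)] [∀ v, IsProbabilityMeasure (Q v)]
    (hac : ∀ v, Q v ≪ P v)
    (φ : Fin V → H → ℝ) (hφ : ∀ v, Measurable (φ v))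
    (hexp : ∀ v, Integrable (fun h => Real.exp (φ v h)) (P v))
    (hφint : ∀ v, Integrable (φ v) (Q v))
    (hkl : ∀ v, Integrable (fun h => Real.log (((Q v).rnDeriv (P v) h).toReal)) (Q v)) :
    ∑ v, ρ v * ∫ h, φ v h ∂(Q v)
      ≤ (∑ v, ρ v * ∫ h, Real.log (((Q v).rnDeriv (P v) h).toReal) ∂(Q v))
        + (∑ v, ρ v * Real.log (ρ v / π v))
        + Real.log (∑ v, π v * ∫ h, Real.exp (φ v h) ∂(P v)) := by
  classical
  set A : Fin V → ℝ := fun v => ∫ h, Real.exp (φ v h) ∂(P v) with hAdef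
  set K : Fin V → ℝ := fun v => ∫ h, Real.log (((Q v).rnDeriv (P v) h).toReal) ∂(Q v)
    with hKdef
  have hApos : ∀ v, 0 < A v := by
    intro v
    rw [hAdef]
    refine (integral_pos_iff_support_of_nonneg_ae
      (Filter.Eventually.of_forall fun h => (Real.exp_pos _).le) (hexp v)).mpr ?_
    have hsupp : Function.support (fun h => Real.exp (φ v h)) = Set.univ :=
      Set.eq_univ_iff_forall.mpr fun h => Function.mem_support.mpr (Real.exp_pos _).ne'
    rw [hsupp]
    simp
  have step1 : ∀ v, ∫ h, φ v h ∂(Q v) ≤ K v + Real.log (A v) := fun v =>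
    one_level_com (Q v) (P v) (hac v) (φ v) (hφ v) (hexp v) (hφint v) (hkl v)
  have step2 : ∑ v, ρ v * ∫ h, φ v h ∂(Q v)
      ≤ (∑ v, ρ v * K v) + ∑ v, ρ v * Real.log (A v) := by
    rw [← Finset.sum_add_distrib]
    refine Finset.sum_le_sum fun v _ => ?_
    calc ρ v * ∫ h, φ v h ∂(Q v) ≤ ρ v * (K v + Real.log (A v)) :=
          mul_le_mul_of_nonneg_left (step1 v) (hρ0 v)
      _ = ρ v * K v + ρ v * Real.log (A v) := by ring
  have step3 := discrete_dv V π ρ A hπ0 hρ0 hρ1 hacρ hApos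
  linarith
end

section
/- (Gibbs risk decomposition) For any distribution Q on X × {−1,1} and any distribution 𝒬 on a hypothesis class H of functions X → {−1,1}, the Gibbs risk decomposes as R_Q(G_𝒬) = (1/2)·d_{Q_X}(𝒬) + e_Q(𝒬), where R_Q(G_𝒬) = E_{h∼𝒬} E_{(x,y)∼Q}[1[h(x)≠y]], d_{Q_X}(𝒬) = E_{(h,h')∼𝒬²} E_{x∼Q_X}[1[h(x)≠h'(x)]] is the expected disagreement, and e_Q(𝒬) = E_{(h,h')∼𝒬²} E_{(x,y)∼Q}[1[h(x)≠y]·1[h'(x)≠y]] is the expected joint error. -/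
open MeasureTheory

private lemma integrable_of_bdd1 {α : Type*} [MeasurableSpace α] (μ : Measure α)
    [IsFiniteMeasure μ] {g : α → ℝ} (hg : Measurable g) (hb : ∀ a, ‖g a‖ ≤ 1) :
    Integrable g μ :=
  (integrable_const 1).mono' hg.aestronglyMeasurable (Filter.Eventually.of_forall hb)

/-- Gibbs risk decomposition `R_Q(G_𝒬) = (1/2) d_{Q_X}(𝒬) + e_Q(𝒬)` for binary
classification. Labels form a two-element set, encoded by `Bool`; `f h x` is the
prediction of classifier `h` on input `x`; the 0-1 loss is `if a = b then 0 else 1`. -/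
theorem gibbs_risk_decomposition {X H : Type*} [MeasurableSpace X] [MeasurableSpace H]
    (Q : Measure (X × Bool)) [IsProbabilityMeasure Q]
    (𝒬 : Measure H) [IsProbabilityMeasure 𝒬]
    (f : H → X → Bool)
    (hf : Measurable fun p : H × X => f p.1 p.2) :
    (∫ h, ∫ p, (if f h p.1 = p.2 then (0 : ℝ) else 1) ∂Q ∂𝒬)
      = (1 / 2) * (∫ hh, ∫ x, (if f hh.1 x = f hh.2 x then (0 : ℝ) else 1)
            ∂(Q.map Prod.fst) ∂(𝒬.prod 𝒬))
        + ∫ hh, ∫ p, (if f hh.1 p.1 = p.2 then (0 : ℝ) else 1)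
            * (if f hh.2 p.1 = p.2 then (0 : ℝ) else 1) ∂Q ∂(𝒬.prod 𝒬) := by
  classical
  haveI : IsProbabilityMeasure (Q.map (Prod.fst : X × Bool → X)) :=
    Measure.isProbabilityMeasure_map measurable_fst.aemeasurable
  set L : H → X × Bool → ℝ := fun h p => if f h p.1 = p.2 then 0 else 1 with hLdef
  -- measurability of the uncurried loss
  have hmL : Measurable fun q : H × (X × Bool) => L q.1 q.2 := by
    have hp : Measurable fun q : H × (X × Bool) => (f q.1 q.2.1, q.2.2) :=
      (hf.comp (measurable_fst.prodMk (measurable_fst.comp measurable_snd))).prodMk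
        (measurable_snd.comp measurable_snd)
    have hset : MeasurableSet {q : H × (X × Bool) | f q.1 q.2.1 = q.2.2} := by
      have he : {q : H × (X × Bool) | f q.1 q.2.1 = q.2.2}
          = (fun q : H × (X × Bool) => (f q.1 q.2.1, q.2.2)) ⁻¹' {p | p.1 = p.2} := rfl
      rw [he]
      exact hp ((Set.to_countable _).measurableSet)
    exact Measurable.ite hset measurable_const measurable_const
  have hLb : ∀ h p, ‖L h p‖ ≤ 1 := by
    intro h p; simp only [hLdef]; split <;> simp
  -- disagreement on X
  set D0 : H × H → X → ℝ := fun hh x => if f hh.1 x = f hh.2 x then 0 else 1 with hD0def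
  have hmD0 : Measurable fun q : (H × H) × X => D0 q.1 q.2 := by
    have h1 : Measurable fun q : (H × H) × X => f q.1.1 q.2 :=
      hf.comp ((measurable_fst.comp measurable_fst).prodMk measurable_snd)
    have h2 : Measurable fun q : (H × H) × X => f q.1.2 q.2 :=
      hf.comp ((measurable_snd.comp measurable_fst).prodMk measurable_snd)
    have hset : MeasurableSet {q : (H × H) × X | f q.1.1 q.2 = f q.1.2 q.2} := by
      have he : {q : (H × H) × X | f q.1.1 q.2 = f q.1.2 q.2}
          = (fun q : (H × H) × X => (f q.1.1 q.2, f q.1.2 q.2)) ⁻¹' {p | p.1 = p.2} := rfl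
      rw [he]
      exact (h1.prodMk h2) ((Set.to_countable _).measurableSet)
    exact Measurable.ite hset measurable_const measurable_const
  have hD0b : ∀ hh x, ‖D0 hh x‖ ≤ 1 := by
    intro hh x; simp only [hD0def]; split <;> simp
  -- joint error on X × Bool
  set E0 : H × H → X × Bool → ℝ := fun hh p => L hh.1 p * L hh.2 p with hE0def
  have hmE0 : Measurable fun q : (H × H) × (X × Bool) => E0 q.1 q.2 := by
    have h1 : Measurable fun q : (H × H) × (X × Bool) => L q.1.1 q.2 :=
      hmL.comp ((measurable_fst.comp measurable_fst).prodMk measurable_snd)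
    have h2 : Measurable fun q : (H × H) × (X × Bool) => L q.1.2 q.2 :=
      hmL.comp ((measurable_snd.comp measurable_fst).prodMk measurable_snd)
    exact h1.mul h2
  have hE0b : ∀ hh p, ‖E0 hh p‖ ≤ 1 := by
    intro hh p
    calc ‖L hh.1 p * L hh.2 p‖ = ‖L hh.1 p‖ * ‖L hh.2 p‖ := norm_mul _ _
    _ ≤ 1 * 1 := mul_le_mul (hLb _ _) (hLb _ _) (norm_nonneg _) zero_le_one
    _ = 1 := one_mul 1
  -- the Gibbs risk of a single classifier
  set G : H → ℝ := fun h => ∫ p, L h p ∂Q with hGdef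
  have hGsm : StronglyMeasurable G := hmL.stronglyMeasurable.integral_prod_right'
  have hGb : ∀ h, ‖G h‖ ≤ 1 := by
    intro h
    have := norm_integral_le_of_norm_le_const (μ := Q) (f := L h) (C := 1)
      (Filter.Eventually.of_forall (hLb h))
    simpa using this
  -- expected disagreement / joint error as functions of (h, h')
  set D : H × H → ℝ := fun hh => ∫ x, D0 hh x ∂(Q.map Prod.fst) with hDdef
  set E : H × H → ℝ := fun hh => ∫ p, E0 hh p ∂Q with hEdef
  have hDsm : StronglyMeasurable D := hmD0.stronglyMeasurable.integral_prod_right'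
  have hEsm : StronglyMeasurable E := hmE0.stronglyMeasurable.integral_prod_right'
  have hDb : ∀ hh, ‖D hh‖ ≤ 1 := by
    intro hh
    have := norm_integral_le_of_norm_le_const (μ := Q.map (Prod.fst : X × Bool → X))
      (f := D0 hh) (C := 1) (Filter.Eventually.of_forall (hD0b hh))
    simpa using this
  have hEb : ∀ hh, ‖E hh‖ ≤ 1 := by
    intro hh
    have := norm_integral_le_of_norm_le_const (μ := Q) (f := E0 hh) (C := 1)
      (Filter.Eventually.of_forall (hE0b hh))
    simpa using this
  -- Step 1: ∫ G(hh.1) and ∫ G(hh.2) over 𝒬 × 𝒬 both equal the LHS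
  have hfst : ∫ hh, G hh.1 ∂(𝒬.prod 𝒬) = ∫ h, G h ∂𝒬 := by
    rw [← integral_map measurable_fst.aemeasurable hGsm.aestronglyMeasurable,
      Measure.map_fst_prod]
    simp
  have hsnd : ∫ hh, G hh.2 ∂(𝒬.prod 𝒬) = ∫ h, G h ∂𝒬 := by
    rw [← integral_map measurable_snd.aemeasurable hGsm.aestronglyMeasurable,
      Measure.map_snd_prod]
    simp
  -- Step 2: pointwise identity, integrated over Q
  have hkey : ∀ hh : H × H, G hh.1 + G hh.2 = D hh + 2 * E hh := by
    intro hh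
    have hint1 : Integrable (L hh.1) Q :=
      integrable_of_bdd1 Q (hmL.comp (measurable_const.prodMk measurable_id)) (hLb hh.1)
    have hint2 : Integrable (L hh.2) Q :=
      integrable_of_bdd1 Q (hmL.comp (measurable_const.prodMk measurable_id)) (hLb hh.2)
    have hintE : Integrable (E0 hh) Q :=
      integrable_of_bdd1 Q (hmE0.comp (measurable_const.prodMk measurable_id)) (hE0b hh)
    have hmD0' : Measurable (D0 hh) :=
      hmD0.comp (measurable_const.prodMk measurable_id)
    have hintD : Integrable (fun p : X × Bool => D0 hh p.1) Q :=
      integrable_of_bdd1 Q (hmD0'.comp measurable_fst) (fun p => hD0b hh p.1)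
    have hpt : ∀ p : X × Bool, L hh.1 p + L hh.2 p = D0 hh p.1 + 2 * E0 hh p := by
      intro p
      simp only [hLdef, hD0def, hE0def]
      rcases Bool.dichotomy (f hh.1 p.1) with h1 | h1 <;>
        rcases Bool.dichotomy (f hh.2 p.1) with h2 | h2 <;>
        rcases Bool.dichotomy p.2 with h3 | h3 <;>
        simp [h1, h2, h3] <;> norm_num
    calc G hh.1 + G hh.2 = ∫ p, (L hh.1 p + L hh.2 p) ∂Q := (integral_add hint1 hint2).symm
    _ = ∫ p, (D0 hh p.1 + 2 * E0 hh p) ∂Q := by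
        exact integral_congr_ae (Filter.Eventually.of_forall hpt)
    _ = (∫ p : X × Bool, D0 hh p.1 ∂Q) + 2 * ∫ p, E0 hh p ∂Q := by
        rw [integral_add hintD (hintE.const_mul 2), integral_const_mul]
    _ = D hh + 2 * E hh := by
        congr 1
        exact (integral_map measurable_fst.aemeasurable hmD0'.aestronglyMeasurable).symm
  -- Step 3: integrate the identity over 𝒬 × 𝒬
  have hintG1 : Integrable (fun hh : H × H => G hh.1) (𝒬.prod 𝒬) :=
    integrable_of_bdd1 _ (hGsm.measurable.comp measurable_fst) (fun hh => hGb hh.1)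
  have hintG2 : Integrable (fun hh : H × H => G hh.2) (𝒬.prod 𝒬) :=
    integrable_of_bdd1 _ (hGsm.measurable.comp measurable_snd) (fun hh => hGb hh.2)
  have hintD : Integrable D (𝒬.prod 𝒬) := integrable_of_bdd1 _ hDsm.measurable hDb
  have hintE : Integrable E (𝒬.prod 𝒬) := integrable_of_bdd1 _ hEsm.measurable hEb
  have hsum : (∫ h, G h ∂𝒬) + (∫ h, G h ∂𝒬)
      = (∫ hh, D hh ∂(𝒬.prod 𝒬)) + 2 * ∫ hh, E hh ∂(𝒬.prod 𝒬) := by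
    calc (∫ h, G h ∂𝒬) + (∫ h, G h ∂𝒬)
        = (∫ hh, G hh.1 ∂(𝒬.prod 𝒬)) + ∫ hh, G hh.2 ∂(𝒬.prod 𝒬) := by rw [hfst, hsnd]
    _ = ∫ hh, (G hh.1 + G hh.2) ∂(𝒬.prod 𝒬) := (integral_add hintG1 hintG2).symm
    _ = ∫ hh, (D hh + 2 * E hh) ∂(𝒬.prod 𝒬) :=
        integral_congr_ae (Filter.Eventually.of_forall hkey)
    _ = (∫ hh, D hh ∂(𝒬.prod 𝒬)) + 2 * ∫ hh, E hh ∂(𝒬.prod 𝒬) := by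
        rw [integral_add hintD (hintE.const_mul 2), integral_const_mul]
  -- conclude
  have hL : (∫ h, ∫ p, (if f h p.1 = p.2 then (0 : ℝ) else 1) ∂Q ∂𝒬) = ∫ h, G h ∂𝒬 := rfl
  have hD' : (∫ hh, ∫ x, (if f hh.1 x = f hh.2 x then (0 : ℝ) else 1)
      ∂(Q.map Prod.fst) ∂(𝒬.prod 𝒬)) = ∫ hh, D hh ∂(𝒬.prod 𝒬) := rfl
  have hE' : (∫ hh, ∫ p, (if f hh.1 p.1 = p.2 then (0 : ℝ) else 1)
      * (if f hh.2 p.1 = p.2 then (0 : ℝ) else 1) ∂Q ∂(𝒬.prod 𝒬))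
      = ∫ hh, E hh ∂(𝒬.prod 𝒬) := rfl
  rw [hL, hD', hE']
  linarith
end

section
/- (Multi-view domain adaptation bound) For any distributions Q (source) and P (target) on X × {−1,1}, any family of view-specific hypothesis sets H_v and posterior distributions Q_v on H_v for v = 1,…,V, and any hyper-posterior ρ on the views, the target Gibbs risk satisfies R_P(G^MV_ρ) ≤ R_Q(G^MV_ρ) + (1/2)·dis^MV_ρ(Q_X, P_X) + λ_ρ, where dis^MV_ρ(Q_X,P_X) = |d^MV_{P_X}(ρ) − d^MV_{Q_X}(ρ)| is the multi-view domain disagreement and λ_ρ = |e^MV_P(ρ) − e^MV_Q(ρ)| is the deviation of expected joint errors. -/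
open MeasureTheory ProbabilityTheory

private lemma bool_ident (a b y : Bool) :
    (if a = y then (0:ℝ) else 1) + (if b = y then (0:ℝ) else 1)
      = (if a = b then (0:ℝ) else 1)
        + 2 * ((if a = y then (0:ℝ) else 1) * (if b = y then (0:ℝ) else 1)) := by
  cases a <;> cases b <;> cases y <;> norm_num

private lemma indm : Measurable fun p : Bool × Bool => if p.1 = p.2 then (0:ℝ) else 1 := by
  measurability

private lemma int_bdd {α : Type*} [MeasurableSpace α] {μ : Measure α} [IsFiniteMeasure μ]
    {g : α → ℝ} (hm : AEStronglyMeasurable g μ) (hb : ∀ x, |g x| ≤ 1) : Integrable g μ :=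
  (integrable_const (1:ℝ)).mono' hm (Filter.Eventually.of_forall (by simpa using hb))

private lemma abs_int_le {α : Type*} [MeasurableSpace α] {μ : Measure α} [IsProbabilityMeasure μ]
    {g : α → ℝ} (hb : ∀ x, |g x| ≤ 1) : |∫ x, g x ∂μ| ≤ 1 := by
  have := norm_integral_le_of_norm_le_const (μ := μ) (f := g) (C := 1)
    (Filter.Eventually.of_forall (by simpa using hb))
  simpa using this

private lemma decomp {V H X : Type*}
    [MeasurableSpace V] [MeasurableSpace H] [MeasurableSpace X]
    (ρ : Measure V) [IsProbabilityMeasure ρ]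
    (Qv : V → Measure H) [∀ v, IsProbabilityMeasure (Qv v)]
    (μ : Measure (X × Bool)) [IsProbabilityMeasure μ]
    (f : V → H → X → Bool)
    (hf : Measurable fun t : (V × H) × X => f t.1.1 t.1.2 t.2)
    (hker : Measurable Qv) :
    (∫ v, ∫ h, ∫ p, (if f v h p.1 = p.2 then (0:ℝ) else 1) ∂μ ∂(Qv v) ∂ρ)
      = (1/2) * (∫ w, ∫ hh, ∫ x, (if f w.1 hh.1 x = f w.2 hh.2 x then (0:ℝ) else 1)
            ∂(μ.map Prod.fst) ∂((Qv w.1).prod (Qv w.2)) ∂(ρ.prod ρ))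
        + (∫ w, ∫ hh, ∫ p, (if f w.1 hh.1 p.1 = p.2 then (0:ℝ) else 1)
            * (if f w.2 hh.2 p.1 = p.2 then (0:ℝ) else 1)
            ∂μ ∂((Qv w.1).prod (Qv w.2)) ∂(ρ.prod ρ)) := by
  -- kernels
  set κ : Kernel V H := ⟨Qv, hker⟩ with hκ
  haveI : IsMarkovKernel κ := ⟨fun v => by exact inferInstanceAs (IsProbabilityMeasure (Qv v))⟩
  set κ2 : Kernel (V × V) (H × H) :=
    (κ.comap Prod.fst measurable_fst) ×ₖ (κ.comap Prod.snd measurable_snd) with hκ2def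
  haveI : IsMarkovKernel κ2 := by infer_instance
  have hκ2 : ∀ w : V × V, κ2 w = (Qv w.1).prod (Qv w.2) := by
    intro w
    rw [hκ2def, Kernel.prod_apply, Kernel.comap_apply, Kernel.comap_apply]
    rfl
  -- basic measurable maps
  have hfx : ∀ v h, Measurable fun x : X => f v h x := fun v h =>
    hf.comp (@measurable_prodMk_left (V × H) X _ _ (v, h))
  have mF : Measurable fun t : (V × H) × (X × Bool) =>
      (if f t.1.1 t.1.2 t.2.1 = t.2.2 then (0:ℝ) else 1) := by
    have h1 : Measurable fun t : (V × H) × (X × Bool) => f t.1.1 t.1.2 t.2.1 :=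
      hf.comp (measurable_fst.prodMk measurable_snd.fst)
    exact indm.comp (h1.prodMk measurable_snd.snd)
  -- g v h = Gibbs risk of hypothesis (v,h)
  set g : V → H → ℝ := fun v h => ∫ p, (if f v h p.1 = p.2 then (0:ℝ) else 1) ∂μ with hg
  have hgsm : StronglyMeasurable fun q : V × H => g q.1 q.2 := by
    have := mF.stronglyMeasurable.integral_prod_right' (ν := μ)
    simpa [hg] using this
  have hgb : ∀ v h, |g v h| ≤ 1 := by
    intro v h
    refine abs_int_le fun p => ?_
    split <;> norm_num
  set G : V → ℝ := fun v => ∫ h, g v h ∂(Qv v) with hG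
  have hGsm : StronglyMeasurable G := by
    have := hgsm.integral_kernel_prod_right' (κ := κ)
    exact this
  have hGb : ∀ v, |G v| ≤ 1 := fun v => abs_int_le (hgb v)
  -- measurable maps on the doubled space
  have m1 : Measurable fun t : ((V × V) × (H × H)) × (X × Bool) => f t.1.1.1 t.1.2.1 t.2.1 :=
    hf.comp (((measurable_fst.fst.fst.prodMk measurable_fst.snd.fst)).prodMk
      measurable_snd.fst)
  have m2 : Measurable fun t : ((V × V) × (H × H)) × (X × Bool) => f t.1.1.2 t.1.2.2 t.2.1 :=
    hf.comp (((measurable_fst.fst.snd.prodMk measurable_fst.snd.snd)).prodMk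
      measurable_snd.fst)
  have my : Measurable fun t : ((V × V) × (H × H)) × (X × Bool) => t.2.2 := measurable_snd.snd
  have mD : Measurable fun t : ((V × V) × (H × H)) × (X × Bool) =>
      (if f t.1.1.1 t.1.2.1 t.2.1 = f t.1.1.2 t.1.2.2 t.2.1 then (0:ℝ) else 1) :=
    indm.comp (m1.prodMk m2)
  have mE : Measurable fun t : ((V × V) × (H × H)) × (X × Bool) =>
      (if f t.1.1.1 t.1.2.1 t.2.1 = t.2.2 then (0:ℝ) else 1)
        * (if f t.1.1.2 t.1.2.2 t.2.1 = t.2.2 then (0:ℝ) else 1) :=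
    (indm.comp (m1.prodMk my)).mul (indm.comp (m2.prodMk my))
  -- inner integrals as functions of (w, hh)
  set Dp : (V × V) × (H × H) → ℝ := fun q =>
    ∫ p, (if f q.1.1 q.2.1 p.1 = f q.1.2 q.2.2 p.1 then (0:ℝ) else 1) ∂μ with hDp
  set Ep : (V × V) × (H × H) → ℝ := fun q =>
    ∫ p, (if f q.1.1 q.2.1 p.1 = p.2 then (0:ℝ) else 1)
      * (if f q.1.2 q.2.2 p.1 = p.2 then (0:ℝ) else 1) ∂μ with hEp
  have hDsm : StronglyMeasurable Dp := by
    have := mD.stronglyMeasurable.integral_prod_right' (ν := μ)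
    simpa [hDp] using this
  have hEsm : StronglyMeasurable Ep := by
    have := mE.stronglyMeasurable.integral_prod_right' (ν := μ)
    simpa [hEp] using this
  have hDb : ∀ q, |Dp q| ≤ 1 := by
    intro q; refine abs_int_le fun p => ?_; split <;> norm_num
  have hEb : ∀ q, |Ep q| ≤ 1 := by
    intro q; refine abs_int_le fun p => ?_
    rw [abs_le]; constructor <;> split <;> split <;> norm_num
  -- pointwise identity at the (w, hh) level
  have hpt : ∀ q : (V × V) × (H × H), g q.1.1 q.2.1 + g q.1.2 q.2.2 = Dp q + 2 * Ep q := by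
    intro q
    have i1 : Integrable
        (fun p : X × Bool => (if f q.1.1 q.2.1 p.1 = p.2 then (0:ℝ) else 1)) μ :=
      int_bdd (mF.comp (@measurable_prodMk_left (V × H) (X × Bool) _ _
        (q.1.1, q.2.1))).aestronglyMeasurable (fun p => by split <;> norm_num)
    have i2 : Integrable
        (fun p : X × Bool => (if f q.1.2 q.2.2 p.1 = p.2 then (0:ℝ) else 1)) μ :=
      int_bdd (mF.comp (@measurable_prodMk_left (V × H) (X × Bool) _ _
        (q.1.2, q.2.2))).aestronglyMeasurable (fun p => by split <;> norm_num)
    have iE : Integrable (fun p : X × Bool =>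
        (if f q.1.1 q.2.1 p.1 = p.2 then (0:ℝ) else 1)
          * (if f q.1.2 q.2.2 p.1 = p.2 then (0:ℝ) else 1)) μ :=
      int_bdd (mE.comp (@measurable_prodMk_left ((V × V) × (H × H)) (X × Bool) _ _
        q)).aestronglyMeasurable
        (fun p => by rw [abs_le]; constructor <;> split <;> split <;> norm_num)
    calc g q.1.1 q.2.1 + g q.1.2 q.2.2
        = ∫ p, ((if f q.1.1 q.2.1 p.1 = p.2 then (0:ℝ) else 1)
            + (if f q.1.2 q.2.2 p.1 = p.2 then (0:ℝ) else 1)) ∂μ := (integral_add i1 i2).symm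
      _ = ∫ p, ((if f q.1.1 q.2.1 p.1 = f q.1.2 q.2.2 p.1 then (0:ℝ) else 1)
            + 2 * ((if f q.1.1 q.2.1 p.1 = p.2 then (0:ℝ) else 1)
              * (if f q.1.2 q.2.2 p.1 = p.2 then (0:ℝ) else 1))) ∂μ := by
          refine integral_congr_ae (Filter.Eventually.of_forall fun p => ?_)
          exact bool_ident _ _ _
      _ = Dp q + 2 * Ep q := by
          have iD : Integrable (fun p : X × Bool =>
              (if f q.1.1 q.2.1 p.1 = f q.1.2 q.2.2 p.1 then (0:ℝ) else 1)) μ :=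
            int_bdd (mD.comp (@measurable_prodMk_left ((V × V) × (H × H)) (X × Bool) _ _
              q)).aestronglyMeasurable (fun p => by split <;> norm_num)
          rw [integral_add iD (iE.const_mul 2), integral_const_mul]
  -- sections of g on the doubled space
  have hg1sm : StronglyMeasurable fun q : (V × V) × (H × H) => g q.1.1 q.2.1 :=
    hgsm.comp_measurable (measurable_fst.fst.prodMk measurable_snd.fst)
  have hg2sm : StronglyMeasurable fun q : (V × V) × (H × H) => g q.1.2 q.2.2 :=
    hgsm.comp_measurable (measurable_fst.snd.prodMk measurable_snd.snd)
  -- marginalization of the first copy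
  have innerA : ∀ w : V × V,
      (∫ hh, g w.1 hh.1 ∂((Qv w.1).prod (Qv w.2))) = G w.1 := by
    intro w
    have hsec : StronglyMeasurable (g w.1) :=
      hgsm.comp_measurable (@measurable_prodMk_left V H _ _ w.1)
    calc (∫ hh, g w.1 hh.1 ∂((Qv w.1).prod (Qv w.2)))
        = ∫ h, g w.1 h ∂(((Qv w.1).prod (Qv w.2)).map Prod.fst) :=
          (integral_map measurable_fst.aemeasurable hsec.aestronglyMeasurable).symm
      _ = G w.1 := by rw [Measure.map_fst_prod]; simp [hG]
  have innerB : ∀ w : V × V,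
      (∫ hh, g w.2 hh.2 ∂((Qv w.1).prod (Qv w.2))) = G w.2 := by
    intro w
    have hsec : StronglyMeasurable (g w.2) :=
      hgsm.comp_measurable (@measurable_prodMk_left V H _ _ w.2)
    calc (∫ hh, g w.2 hh.2 ∂((Qv w.1).prod (Qv w.2)))
        = ∫ h, g w.2 h ∂(((Qv w.1).prod (Qv w.2)).map Prod.snd) :=
          (integral_map measurable_snd.aemeasurable hsec.aestronglyMeasurable).symm
      _ = G w.2 := by rw [Measure.map_snd_prod]; simp [hG]
  have outerA : (∫ w, G w.1 ∂(ρ.prod ρ)) = ∫ v, G v ∂ρ := by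
    calc (∫ w : V × V, G w.1 ∂(ρ.prod ρ))
        = ∫ v, G v ∂((ρ.prod ρ).map Prod.fst) :=
          (integral_map measurable_fst.aemeasurable hGsm.aestronglyMeasurable).symm
      _ = ∫ v, G v ∂ρ := by rw [Measure.map_fst_prod]; simp
  have outerB : (∫ w, G w.2 ∂(ρ.prod ρ)) = ∫ v, G v ∂ρ := by
    calc (∫ w : V × V, G w.2 ∂(ρ.prod ρ))
        = ∫ v, G v ∂((ρ.prod ρ).map Prod.snd) :=
          (integral_map measurable_snd.aemeasurable hGsm.aestronglyMeasurable).symm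
      _ = ∫ v, G v ∂ρ := by rw [Measure.map_snd_prod]; simp
  -- integrability at the hh level
  have ig1 : ∀ w : V × V, Integrable (fun hh => g w.1 hh.1) ((Qv w.1).prod (Qv w.2)) :=
    fun w => int_bdd (hg1sm.comp_measurable
      (@measurable_prodMk_left (V × V) (H × H) _ _ w)).aestronglyMeasurable
      (fun hh => hgb _ _)
  have ig2 : ∀ w : V × V, Integrable (fun hh => g w.2 hh.2) ((Qv w.1).prod (Qv w.2)) :=
    fun w => int_bdd (hg2sm.comp_measurable
      (@measurable_prodMk_left (V × V) (H × H) _ _ w)).aestronglyMeasurable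
      (fun hh => hgb _ _)
  have iDhh : ∀ w : V × V, Integrable (fun hh => Dp (w, hh)) ((Qv w.1).prod (Qv w.2)) :=
    fun w => int_bdd (hDsm.comp_measurable
      (@measurable_prodMk_left (V × V) (H × H) _ _ w)).aestronglyMeasurable
      (fun hh => hDb _)
  have iEhh : ∀ w : V × V, Integrable (fun hh => Ep (w, hh)) ((Qv w.1).prod (Qv w.2)) :=
    fun w => int_bdd (hEsm.comp_measurable
      (@measurable_prodMk_left (V × V) (H × H) _ _ w)).aestronglyMeasurable
      (fun hh => hEb _)
  -- integrability at the w level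
  have iDw : Integrable (fun w : V × V =>
      ∫ hh, Dp (w, hh) ∂((Qv w.1).prod (Qv w.2))) (ρ.prod ρ) := by
    have heq : (fun w : V × V => ∫ hh, Dp (w, hh) ∂((Qv w.1).prod (Qv w.2)))
        = fun w => ∫ hh, Dp (w, hh) ∂(κ2 w) := by
      funext w; rw [hκ2]
    rw [heq]
    exact int_bdd (hDsm.integral_kernel_prod_right').aestronglyMeasurable
      (fun w => by rw [hκ2]; exact abs_int_le (fun hh => hDb _))
  have iEw : Integrable (fun w : V × V =>
      ∫ hh, Ep (w, hh) ∂((Qv w.1).prod (Qv w.2))) (ρ.prod ρ) := by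
    have heq : (fun w : V × V => ∫ hh, Ep (w, hh) ∂((Qv w.1).prod (Qv w.2)))
        = fun w => ∫ hh, Ep (w, hh) ∂(κ2 w) := by
      funext w; rw [hκ2]
    rw [heq]
    exact int_bdd (hEsm.integral_kernel_prod_right').aestronglyMeasurable
      (fun w => by rw [hκ2]; exact abs_int_le (fun hh => hEb _))
  have iG1w : Integrable (fun w : V × V => G w.1) (ρ.prod ρ) :=
    int_bdd (hGsm.comp_measurable measurable_fst).aestronglyMeasurable (fun w => hGb _)
  have iG2w : Integrable (fun w : V × V => G w.2) (ρ.prod ρ) :=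
    int_bdd (hGsm.comp_measurable measurable_snd).aestronglyMeasurable (fun w => hGb _)
  -- the key double-integral identity
  have key : 2 * (∫ v, G v ∂ρ)
      = (∫ w, ∫ hh, Dp (w, hh) ∂((Qv w.1).prod (Qv w.2)) ∂(ρ.prod ρ))
        + 2 * (∫ w, ∫ hh, Ep (w, hh) ∂((Qv w.1).prod (Qv w.2)) ∂(ρ.prod ρ)) := by
    have lhs : (∫ w, ∫ hh, (g w.1 hh.1 + g w.2 hh.2)
        ∂((Qv w.1).prod (Qv w.2)) ∂(ρ.prod ρ)) = 2 * (∫ v, G v ∂ρ) := by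
      have step : ∀ w : V × V,
          (∫ hh, (g w.1 hh.1 + g w.2 hh.2) ∂((Qv w.1).prod (Qv w.2))) = G w.1 + G w.2 := by
        intro w
        rw [integral_add (ig1 w) (ig2 w), innerA w, innerB w]
      rw [integral_congr_ae (Filter.Eventually.of_forall step), integral_add iG1w iG2w,
        outerA, outerB]
      ring
    have rhs : (∫ w, ∫ hh, (g w.1 hh.1 + g w.2 hh.2)
        ∂((Qv w.1).prod (Qv w.2)) ∂(ρ.prod ρ))
        = (∫ w, ∫ hh, Dp (w, hh) ∂((Qv w.1).prod (Qv w.2)) ∂(ρ.prod ρ))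
          + 2 * (∫ w, ∫ hh, Ep (w, hh) ∂((Qv w.1).prod (Qv w.2)) ∂(ρ.prod ρ)) := by
      have step : ∀ w : V × V,
          (∫ hh, (g w.1 hh.1 + g w.2 hh.2) ∂((Qv w.1).prod (Qv w.2)))
            = (∫ hh, Dp (w, hh) ∂((Qv w.1).prod (Qv w.2)))
              + 2 * (∫ hh, Ep (w, hh) ∂((Qv w.1).prod (Qv w.2))) := by
        intro w
        have : (fun hh : H × H => g w.1 hh.1 + g w.2 hh.2)
            = fun hh => Dp (w, hh) + 2 * Ep (w, hh) := by
          funext hh; exact hpt (w, hh)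
        rw [this, integral_add (iDhh w) ((iEhh w).const_mul 2), integral_const_mul]
      rw [integral_congr_ae (Filter.Eventually.of_forall step),
        integral_add iDw (iEw.const_mul 2), integral_const_mul]
    rw [← lhs, rhs]
  -- rewrite the disagreement term through the pushforward
  have hmap : (∫ w, ∫ hh, ∫ x, (if f w.1 hh.1 x = f w.2 hh.2 x then (0:ℝ) else 1)
        ∂(μ.map Prod.fst) ∂((Qv w.1).prod (Qv w.2)) ∂(ρ.prod ρ))
      = ∫ w, ∫ hh, Dp (w, hh) ∂((Qv w.1).prod (Qv w.2)) ∂(ρ.prod ρ) := by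
    refine integral_congr_ae (Filter.Eventually.of_forall fun w => ?_)
    refine integral_congr_ae (Filter.Eventually.of_forall fun hh => ?_)
    have hm : Measurable fun x : X => (if f w.1 hh.1 x = f w.2 hh.2 x then (0:ℝ) else 1) :=
      indm.comp ((hfx w.1 hh.1).prodMk (hfx w.2 hh.2))
    exact integral_map measurable_fst.aemeasurable hm.aestronglyMeasurable
  have lhs_eq : (∫ v, ∫ h, ∫ p, (if f v h p.1 = p.2 then (0:ℝ) else 1) ∂μ ∂(Qv v) ∂ρ)
      = ∫ v, G v ∂ρ := rfl
  have rhs_eq : (∫ w, ∫ hh, ∫ p, (if f w.1 hh.1 p.1 = p.2 then (0:ℝ) else 1)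
        * (if f w.2 hh.2 p.1 = p.2 then (0:ℝ) else 1)
        ∂μ ∂((Qv w.1).prod (Qv w.2)) ∂(ρ.prod ρ))
      = ∫ w, ∫ hh, Ep (w, hh) ∂((Qv w.1).prod (Qv w.2)) ∂(ρ.prod ρ) := rfl
  rw [lhs_eq, hmap, rhs_eq]
  linarith [key]
/-- Multi-view domain adaptation bound:
`R_P(G^MV_ρ) ≤ R_Q(G^MV_ρ) + (1/2)·dis^MV_ρ(Q_X, P_X) + λ_ρ`.
`V` is the space of views with hyper-posterior `ρ`, `Qv v` the posterior on the
hypothesis space for view `v`, `f v h x` the (binary, `Bool`-valued) prediction of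
hypothesis `h` of view `v` on the view-specific part of input `x`, and `Q`, `P`
the source and target distributions on `X × Bool` with marginals `Q.map Prod.fst`
and `P.map Prod.fst`. -/
theorem multiview_da_bound {V H X : Type*}
    [MeasurableSpace V] [MeasurableSpace H] [MeasurableSpace X]
    (ρ : Measure V) [IsProbabilityMeasure ρ]
    (Qv : V → Measure H) [∀ v, IsProbabilityMeasure (Qv v)]
    (Q P : Measure (X × Bool)) [IsProbabilityMeasure Q] [IsProbabilityMeasure P]
    (f : V → H → X → Bool)
    (hf : Measurable fun t : (V × H) × X => f t.1.1 t.1.2 t.2)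
    (hker : Measurable Qv) :
    (∫ v, ∫ h, ∫ p, (if f v h p.1 = p.2 then (0 : ℝ) else 1) ∂P ∂(Qv v) ∂ρ)
      ≤ (∫ v, ∫ h, ∫ p, (if f v h p.1 = p.2 then (0 : ℝ) else 1) ∂Q ∂(Qv v) ∂ρ)
        + (1 / 2) *
          |(∫ w, ∫ hh, ∫ x, (if f w.1 hh.1 x = f w.2 hh.2 x then (0 : ℝ) else 1)
                ∂(P.map Prod.fst) ∂((Qv w.1).prod (Qv w.2)) ∂(ρ.prod ρ))
           - (∫ w, ∫ hh, ∫ x, (if f w.1 hh.1 x = f w.2 hh.2 x then (0 : ℝ) else 1)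
                ∂(Q.map Prod.fst) ∂((Qv w.1).prod (Qv w.2)) ∂(ρ.prod ρ))|
        + |(∫ w, ∫ hh, ∫ p, (if f w.1 hh.1 p.1 = p.2 then (0 : ℝ) else 1)
                * (if f w.2 hh.2 p.1 = p.2 then (0 : ℝ) else 1)
                ∂P ∂((Qv w.1).prod (Qv w.2)) ∂(ρ.prod ρ))
           - (∫ w, ∫ hh, ∫ p, (if f w.1 hh.1 p.1 = p.2 then (0 : ℝ) else 1)
                * (if f w.2 hh.2 p.1 = p.2 then (0 : ℝ) else 1)
                ∂Q ∂((Qv w.1).prod (Qv w.2)) ∂(ρ.prod ρ))| := by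
  rw [decomp ρ Qv P f hf hker, decomp ρ Qv Q f hf hker]
  set dP := (∫ w, ∫ hh, ∫ x, (if f w.1 hh.1 x = f w.2 hh.2 x then (0 : ℝ) else 1)
      ∂(P.map Prod.fst) ∂((Qv w.1).prod (Qv w.2)) ∂(ρ.prod ρ))
  set dQ := (∫ w, ∫ hh, ∫ x, (if f w.1 hh.1 x = f w.2 hh.2 x then (0 : ℝ) else 1)
      ∂(Q.map Prod.fst) ∂((Qv w.1).prod (Qv w.2)) ∂(ρ.prod ρ))
  set eP := (∫ w, ∫ hh, ∫ p, (if f w.1 hh.1 p.1 = p.2 then (0 : ℝ) else 1)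
      * (if f w.2 hh.2 p.1 = p.2 then (0 : ℝ) else 1)
      ∂P ∂((Qv w.1).prod (Qv w.2)) ∂(ρ.prod ρ))
  set eQ := (∫ w, ∫ hh, ∫ p, (if f w.1 hh.1 p.1 = p.2 then (0 : ℝ) else 1)
      * (if f w.2 hh.2 p.1 = p.2 then (0 : ℝ) else 1)
      ∂Q ∂((Qv w.1).prod (Qv w.2)) ∂(ρ.prod ρ))
  have h1 : dP - dQ ≤ |dP - dQ| := le_abs_self _
  have h2 : eP - eQ ≤ |eP - eQ| := le_abs_self _
  linarith
end

section
/- (Maurer's comparison lemma) Let X = (X₁,…,X_m) be i.i.d. random variables with values in [0,1] and mean μ, and let X' = (X'₁,…,X'_m) be i.i.d. Bernoulli random variables with mean μ. Then for any convex function f : [0,1]^m → ℝ, E[f(X)] ≤ E[f(X')]. -/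
open MeasureTheory



lemma maurer_integrable_of_bounded {α : Type*} [MeasurableSpace α] (μ : Measure α)
    [IsFiniteMeasure μ] {f : α → ℝ} (hf : AEStronglyMeasurable f μ) (C : ℝ)
    (h : ∀ x, |f x| ≤ C) : Integrable f μ :=
  Integrable.mono' (integrable_const C) hf (Filter.Eventually.of_forall fun x => h x)

lemma maurer_finite_smul_dirac (c : ℝ) (a : ℝ) :
    IsFiniteMeasure (ENNReal.ofReal c • Measure.dirac a) :=
  ⟨by rw [Measure.smul_apply, smul_eq_mul]
      exact ENNReal.mul_lt_top ENNReal.ofReal_lt_top (measure_lt_top _ _)⟩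

lemma maurer_integral_bern (μ₀ : ℝ) (h0 : 0 ≤ μ₀) (h1 : μ₀ ≤ 1) (f : ℝ → ℝ)
    (hf : AEStronglyMeasurable f (Measure.dirac 1) ∧ AEStronglyMeasurable f (Measure.dirac 0))
    (C : ℝ) (hC : ∀ x, |f x| ≤ C) :
    ∫ x, f x ∂(ENNReal.ofReal μ₀ • Measure.dirac (1 : ℝ)
        + ENNReal.ofReal (1 - μ₀) • Measure.dirac (0 : ℝ))
      = μ₀ * f 1 + (1 - μ₀) * f 0 := by
  haveI := maurer_finite_smul_dirac μ₀ 1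
  haveI := maurer_finite_smul_dirac (1 - μ₀) 0
  rw [integral_add_measure
      (maurer_integrable_of_bounded _ (hf.1.smul_measure _) C hC)
      (maurer_integrable_of_bounded _ (hf.2.smul_measure _) C hC),
    integral_smul_measure, integral_smul_measure, integral_dirac, integral_dirac,
    ENNReal.toReal_ofReal h0, ENNReal.toReal_ofReal (by linarith), smul_eq_mul, smul_eq_mul]

lemma maurer_ae_pi_mem {m : ℕ} (μ : Measure ℝ) [IsProbabilityMeasure μ]
    (hIcc : μ (Set.Icc (0 : ℝ) 1) = 1) :
    ∀ᵐ x ∂(Measure.pi fun _ : Fin m => μ), x ∈ Set.Icc (0 : Fin m → ℝ) 1 := by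
  have hpi : (Measure.pi fun _ : Fin m => μ) (Set.Icc (0 : Fin m → ℝ) 1) = 1 := by
    rw [← Set.pi_univ_Icc, Measure.pi_pi]
    simp [hIcc]
  have : (Measure.pi fun _ : Fin m => μ) (Set.Icc (0 : Fin m → ℝ) 1)ᶜ = 0 := by
    rw [measure_compl measurableSet_Icc (measure_ne_top _ _), hpi, measure_univ, tsub_self]
  exact Filter.mem_of_superset (MeasureTheory.mem_ae_iff.2 this) (by intro x hx; simpa using hx)

lemma maurer_mu0_mem (μ : Measure ℝ) [IsProbabilityMeasure μ]
    (hsupp : ∀ᵐ x ∂μ, x ∈ Set.Icc (0 : ℝ) 1) (μ₀ : ℝ) (hmean : ∫ x, x ∂μ = μ₀) :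
    0 ≤ μ₀ ∧ μ₀ ≤ 1 := by
  have hint : Integrable (fun x : ℝ => x) μ := by
    refine Integrable.mono' (integrable_const 1) aestronglyMeasurable_id ?_
    filter_upwards [hsupp] with x hx
    rw [Real.norm_eq_abs, abs_le]; exact ⟨by linarith [hx.1], hx.2⟩
  constructor
  · rw [← hmean]
    refine integral_nonneg_of_ae ?_
    filter_upwards [hsupp] with x hx using hx.1
  · rw [← hmean]
    calc ∫ x, x ∂μ ≤ ∫ _x, (1 : ℝ) ∂μ := by
          refine integral_mono_ae hint (integrable_const 1) ?_
          filter_upwards [hsupp] with x hx using hx.2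
      _ = 1 := by simp

lemma maurer_cons_mem {m : ℕ} {t : ℝ} {y : Fin m → ℝ} (ht : t ∈ Set.Icc (0 : ℝ) 1)
    (hy : y ∈ Set.Icc (0 : Fin m → ℝ) 1) :
    Fin.cons t y ∈ Set.Icc (0 : Fin (m + 1) → ℝ) 1 := by
  constructor
  · intro i
    refine Fin.cases ?_ (fun j => ?_) i
    · simpa using ht.1
    · simpa using hy.1 j
  · intro i
    refine Fin.cases ?_ (fun j => ?_) i
    · simpa using ht.2
    · simpa using hy.2 j

lemma maurer_cons_comb {m : ℕ} (t : ℝ) (y : Fin m → ℝ) :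
    (1 - t) • (Fin.cons (0 : ℝ) y : Fin (m + 1) → ℝ) + t • (Fin.cons (1 : ℝ) y : Fin (m + 1) → ℝ)
      = (Fin.cons t y : Fin (m + 1) → ℝ) := by
  funext i
  refine Fin.cases ?_ (fun j => ?_) i <;> simp [Pi.smul_apply] <;> ring

lemma maurer_continuous_cons {m : ℕ} :
    Continuous (fun z : ℝ × (Fin m → ℝ) => (Fin.cons z.1 z.2 : Fin (m + 1) → ℝ)) := by
  refine continuous_pi fun i => ?_
  refine Fin.cases ?_ (fun j => ?_) i
  · simpa using (continuous_fst : Continuous fun z : ℝ × (Fin m → ℝ) => z.1)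
  · simpa [Function.comp_def] using (continuous_apply j).comp
      (continuous_snd : Continuous fun z : ℝ × (Fin m → ℝ) => z.2)

lemma maurer_cons_comb2 {m : ℕ} (c a b : ℝ) (hab : a + b = 1) (x y : Fin m → ℝ) :
    (Fin.cons c (a • x + b • y) : Fin (m + 1) → ℝ)
      = a • (Fin.cons c x : Fin (m + 1) → ℝ) + b • (Fin.cons c y : Fin (m + 1) → ℝ) := by
  funext i
  refine Fin.cases ?_ (fun j => ?_) i
  · simp only [Fin.cons_zero, Pi.add_apply, Pi.smul_apply, Fin.cons_zero, smul_eq_mul]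
    rw [← add_mul, hab, one_mul]
  · simp [Pi.smul_apply]

lemma maurer_bern_prob (μ₀ : ℝ) (h0 : 0 ≤ μ₀) (h1 : μ₀ ≤ 1) :
    IsProbabilityMeasure (ENNReal.ofReal μ₀ • Measure.dirac (1 : ℝ)
      + ENNReal.ofReal (1 - μ₀) • Measure.dirac (0 : ℝ)) := by
  constructor
  rw [Measure.add_apply, Measure.smul_apply, Measure.smul_apply, measure_univ, measure_univ,
    smul_eq_mul, smul_eq_mul, mul_one, mul_one, ← ENNReal.ofReal_add h0 (by linarith)]
  norm_num

lemma maurer_bern_Icc (μ₀ : ℝ) (h0 : 0 ≤ μ₀) (h1 : μ₀ ≤ 1) :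
    (ENNReal.ofReal μ₀ • Measure.dirac (1 : ℝ)
      + ENNReal.ofReal (1 - μ₀) • Measure.dirac (0 : ℝ)) (Set.Icc (0 : ℝ) 1) = 1 := by
  rw [Measure.add_apply, Measure.smul_apply, Measure.smul_apply,
    Measure.dirac_apply_of_mem (by norm_num : (1 : ℝ) ∈ Set.Icc (0:ℝ) 1),
    Measure.dirac_apply_of_mem (by norm_num : (0 : ℝ) ∈ Set.Icc (0:ℝ) 1),
    smul_eq_mul, smul_eq_mul, mul_one, mul_one, ← ENNReal.ofReal_add h0 (by linarith)]
  norm_num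

section
variable (μ : Measure ℝ) [IsProbabilityMeasure μ]

lemma maurer_aux (hsupp : ∀ᵐ x ∂μ, x ∈ Set.Icc (0 : ℝ) 1)
    (μ₀ : ℝ) (hmean : ∫ x, x ∂μ = μ₀) (h0 : 0 ≤ μ₀) (h1 : μ₀ ≤ 1) :
    ∀ (m : ℕ) (g : (Fin m → ℝ) → ℝ) (C : ℝ), Continuous g → (∀ x, |g x| ≤ C) →
      ConvexOn ℝ (Set.Icc (0 : Fin m → ℝ) 1) g →
      ∫ x, g x ∂(Measure.pi fun _ : Fin m => μ)
        ≤ ∫ x, g x ∂(Measure.pi fun _ : Fin m =>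
            (ENNReal.ofReal μ₀ • Measure.dirac (1 : ℝ)
              + ENNReal.ofReal (1 - μ₀) • Measure.dirac (0 : ℝ))) := by
  set ν : Measure ℝ := ENNReal.ofReal μ₀ • Measure.dirac (1 : ℝ)
    + ENNReal.ofReal (1 - μ₀) • Measure.dirac (0 : ℝ) with hνdef
  haveI hνprob : IsProbabilityMeasure ν := maurer_bern_prob μ₀ h0 h1
  have hIccμ : μ (Set.Icc (0 : ℝ) 1) = 1 := by
    rw [← prob_compl_eq_zero_iff measurableSet_Icc]
    exact hsupp
  have hIccν : ν (Set.Icc (0 : ℝ) 1) = 1 := maurer_bern_Icc μ₀ h0 h1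
  intro m
  induction m with
  | zero =>
    intro g C hg hC hconv
    rw [Measure.pi_of_empty, Measure.pi_of_empty, integral_dirac' _ _ hg.stronglyMeasurable]
  | succ n ih =>
    intro g C hg hC hconv
    set π : Measure (Fin n → ℝ) := Measure.pi fun _ : Fin n => μ with hπdef
    set πν : Measure (Fin n → ℝ) := Measure.pi fun _ : Fin n => ν with hπνdef
    set G : ℝ × (Fin n → ℝ) → ℝ := fun z => g (Fin.cons z.1 z.2) with hGdef
    have hGcont : Continuous G := hg.comp maurer_continuous_cons
    have hGbd : ∀ z, |G z| ≤ C := fun z => hC _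
    -- transfer the pi-integrals to product integrals
    have hsymm : ∀ (ρ : Measure ℝ) [IsProbabilityMeasure ρ],
        ∫ x, g x ∂(Measure.pi fun _ : Fin (n + 1) => ρ)
          = ∫ z, G z ∂(ρ.prod (Measure.pi fun _ : Fin n => ρ)) := by
      intro ρ _
      rw [← ((measurePreserving_piFinSuccAbove (fun _ : Fin (n + 1) => ρ) 0).symm).integral_comp'
        (f := (MeasurableEquiv.piFinSuccAbove (fun _ : Fin (n + 1) => ℝ) 0).symm) g]
      refine integral_congr_ae (Filter.Eventually.of_forall fun z => ?_)
      simp only [hGdef, MeasurableEquiv.piFinSuccAbove_symm_apply, Fin.insertNthEquiv,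
        Equiv.coe_fn_mk, Fin.insertNth_zero]
      rfl
    -- basic integrability facts
    have hsec : ∀ t : ℝ, Continuous fun y : Fin n → ℝ => g (Fin.cons t y) := fun t =>
      hg.comp (maurer_continuous_cons.comp (Continuous.prodMk_right t))
    have hintc : ∀ (t : ℝ) (ρ : Measure (Fin n → ℝ)) [IsProbabilityMeasure ρ],
        Integrable (fun y => g (Fin.cons t y)) ρ := fun t ρ _ =>
      maurer_integrable_of_bounded ρ (hsec t).aestronglyMeasurable C (fun y => hC _)
    have hGint : Integrable G (μ.prod π) :=
      maurer_integrable_of_bounded _ hGcont.aestronglyMeasurable C hGbd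
    have hGintν : Integrable G (ν.prod πν) :=
      maurer_integrable_of_bounded _ hGcont.aestronglyMeasurable C hGbd
    -- constants
    set C0 : ℝ := ∫ y, g (Fin.cons 0 y) ∂π with hC0
    set C1 : ℝ := ∫ y, g (Fin.cons 1 y) ∂π with hC1
    set D0 : ℝ := ∫ y, g (Fin.cons 0 y) ∂πν with hD0
    set D1 : ℝ := ∫ y, g (Fin.cons 1 y) ∂πν with hD1
    -- convexity of sections
    have hconvsec : ∀ c : ℝ, c ∈ Set.Icc (0 : ℝ) 1 →
        ConvexOn ℝ (Set.Icc (0 : Fin n → ℝ) 1) fun y => g (Fin.cons c y) := by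
      intro c hc
      refine ⟨convex_Icc _ _, fun x hx y hy a b ha hb hab => ?_⟩
      show g (Fin.cons c (a • x + b • y)) ≤ a • g (Fin.cons c x) + b • g (Fin.cons c y)
      rw [maurer_cons_comb2 c a b hab x y]
      exact hconv.2 (maurer_cons_mem hc hx) (maurer_cons_mem hc hy) ha hb hab
    -- Step A : pointwise bound after inner integration
    have hae : ∀ᵐ y ∂π, y ∈ Set.Icc (0 : Fin n → ℝ) 1 := maurer_ae_pi_mem μ hIccμ
    have stepA : ∀ᵐ t ∂μ, (∫ y, G (t, y) ∂π) ≤ (1 - t) * C0 + t * C1 := by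
      filter_upwards [hsupp] with t ht
      calc (∫ y, G (t, y) ∂π)
          ≤ ∫ y, ((1 - t) * g (Fin.cons 0 y) + t * g (Fin.cons 1 y)) ∂π := by
            refine integral_mono_ae (hintc t π) (((hintc 0 π).const_mul (1 - t)).add
              ((hintc 1 π).const_mul t)) ?_
            filter_upwards [hae] with y hy
            have hcx := hconv.2 (maurer_cons_mem (by norm_num : (0:ℝ) ∈ Set.Icc (0:ℝ) 1) hy)
              (maurer_cons_mem (by norm_num : (1:ℝ) ∈ Set.Icc (0:ℝ) 1) hy)
              (by linarith [ht.2] : (0:ℝ) ≤ 1 - t) ht.1 (by ring)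
            rw [maurer_cons_comb t y] at hcx
            simpa [hGdef, smul_eq_mul] using hcx
        _ = (1 - t) * C0 + t * C1 := by
            rw [integral_add ((hintc 0 π).const_mul (1 - t)) ((hintc 1 π).const_mul t),
              integral_const_mul, integral_const_mul]
    -- integrate Step A over t
    have hid : Integrable (fun t : ℝ => t) μ := by
      refine Integrable.mono' (integrable_const 1) aestronglyMeasurable_id ?_
      filter_upwards [hsupp] with x hx
      rw [Real.norm_eq_abs, abs_le]; exact ⟨by linarith [hx.1], hx.2⟩
    have hmargint : Integrable (fun t => ∫ y, G (t, y) ∂π) μ := hGint.integral_prod_left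
    have hintA : (∫ t, (∫ y, G (t, y) ∂π) ∂μ) ≤ (1 - μ₀) * C0 + μ₀ * C1 := by
      calc (∫ t, (∫ y, G (t, y) ∂π) ∂μ)
          ≤ ∫ t, ((1 - t) * C0 + t * C1) ∂μ := by
            refine integral_mono_ae hmargint ?_ stepA
            have : (fun t : ℝ => (1 - t) * C0 + t * C1)
                = fun t : ℝ => C0 + t * (C1 - C0) := by funext t; ring
            rw [this]
            exact (integrable_const C0).add (hid.mul_const _)
        _ = (1 - μ₀) * C0 + μ₀ * C1 := by
            have : (fun t : ℝ => (1 - t) * C0 + t * C1)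
                = fun t : ℝ => C0 + t * (C1 - C0) := by funext t; ring
            rw [this, integral_add (integrable_const C0) (hid.mul_const _),
              integral_mul_const, integral_const, hmean]
            simp only [measure_univ, probReal_univ, ENNReal.toReal_one, one_smul]
            ring
    -- IH
    have hIH0 : C0 ≤ D0 := ih _ C (hsec 0) (fun y => hC _)
      (hconvsec 0 (by norm_num))
    have hIH1 : C1 ≤ D1 := ih _ C (hsec 1) (fun y => hC _)
      (hconvsec 1 (by norm_num))
    -- RHS computation
    have hFν : StronglyMeasurable fun t => ∫ y, G (t, y) ∂πν :=
      hGcont.stronglyMeasurable.integral_prod_right'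
    have hFνbd : ∀ t, |∫ y, G (t, y) ∂πν| ≤ C := by
      intro t
      rw [← Real.norm_eq_abs]
      calc ‖∫ y, G (t, y) ∂πν‖ ≤ C * (πν Set.univ).toReal :=
            norm_integral_le_of_norm_le_const (Filter.Eventually.of_forall fun y => by
              rw [Real.norm_eq_abs]; exact hGbd _)
        _ = C := by simp [measure_univ]
    have hRHS : ∫ x, g x ∂(Measure.pi fun _ : Fin (n + 1) => ν)
        = μ₀ * D1 + (1 - μ₀) * D0 := by
      rw [hsymm ν, integral_prod _ hGintν]
      have := maurer_integral_bern μ₀ h0 h1 (fun t => ∫ y, G (t, y) ∂πν)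
        ⟨hFν.aestronglyMeasurable, hFν.aestronglyMeasurable⟩ C hFνbd
      rw [← hνdef] at this
      rw [this]
    -- chain
    rw [hsymm μ, integral_prod _ hGint, hRHS]
    have hcoef0 : (0:ℝ) ≤ 1 - μ₀ := by linarith
    calc (∫ t, (∫ y, G (t, y) ∂π) ∂μ)
        ≤ (1 - μ₀) * C0 + μ₀ * C1 := hintA
      _ ≤ (1 - μ₀) * D0 + μ₀ * D1 := by
          gcongr <;> assumption
      _ = μ₀ * D1 + (1 - μ₀) * D0 := by ring

end
/-- Maurer's comparison lemma: if `X = (X₁,…,X_m)` are i.i.d. with law `μ`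
supported in `[0,1]` and mean `μ₀`, and `X' = (X'₁,…,X'_m)` are i.i.d.
Bernoulli with mean `μ₀` (law `ν = μ₀·δ₁ + (1-μ₀)·δ₀`), then for every convex
function `f` on the cube `[0,1]^m`, `E[f(X)] ≤ E[f(X')]`. -/
theorem maurer_comparison (m : ℕ) (μ : Measure ℝ) [IsProbabilityMeasure μ]
    (hsupp : ∀ᵐ x ∂μ, x ∈ Set.Icc (0 : ℝ) 1)
    (μ₀ : ℝ) (hmean : ∫ x, x ∂μ = μ₀)
    (f : (Fin m → ℝ) → ℝ)
    (hconv : ConvexOn ℝ (Set.Icc (0 : Fin m → ℝ) 1) f)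
    (hcont : ContinuousOn f (Set.Icc (0 : Fin m → ℝ) 1)) :
    (∫ x, f x ∂(Measure.pi fun _ : Fin m => μ))
      ≤ ∫ x, f x ∂(Measure.pi fun _ : Fin m =>
          (ENNReal.ofReal μ₀ • Measure.dirac (1 : ℝ)
            + ENNReal.ofReal (1 - μ₀) • Measure.dirac (0 : ℝ))) := by
  obtain ⟨h0, h1⟩ := maurer_mu0_mem μ hsupp μ₀ hmean
  haveI hνprob : IsProbabilityMeasure (ENNReal.ofReal μ₀ • Measure.dirac (1 : ℝ)
      + ENNReal.ofReal (1 - μ₀) • Measure.dirac (0 : ℝ)) := maurer_bern_prob μ₀ h0 h1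
  -- the retraction of `ℝ^m` onto the cube `[0,1]^m`
  set p : (Fin m → ℝ) → (Fin m → ℝ) := fun x i => max 0 (min (x i) 1) with hp
  have hpcont : Continuous p :=
    continuous_pi fun i => continuous_const.max ((continuous_apply i).min continuous_const)
  have hpmem : ∀ x, p x ∈ Set.Icc (0 : Fin m → ℝ) 1 := by
    intro x
    exact ⟨fun i => le_max_left _ _, fun i => max_le zero_le_one (min_le_right _ _)⟩
  have hpid : ∀ x ∈ Set.Icc (0 : Fin m → ℝ) 1, p x = x := by
    intro x hx; funext i
    have h2i : x i ≤ (1 : ℝ) := hx.2 i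
    have h1i : (0 : ℝ) ≤ x i := hx.1 i
    simp only [hp]
    rw [min_eq_left h2i, max_eq_right h1i]
  set g : (Fin m → ℝ) → ℝ := fun x => f (p x) with hg
  have hgcont : Continuous g := hcont.comp_continuous hpcont hpmem
  have hgeq : ∀ x ∈ Set.Icc (0 : Fin m → ℝ) 1, g x = f x := fun x hx => by
    simp only [hg]; rw [hpid x hx]
  have hgconv : ConvexOn ℝ (Set.Icc (0 : Fin m → ℝ) 1) g := by
    refine ⟨convex_Icc _ _, fun x hx y hy a b ha hb hab => ?_⟩
    have hmem : a • x + b • y ∈ Set.Icc (0 : Fin m → ℝ) 1 :=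
      (convex_Icc _ _) hx hy ha hb hab
    show g (a • x + b • y) ≤ a • g x + b • g y
    rw [hgeq _ hmem, hgeq _ hx, hgeq _ hy]
    exact hconv.2 hx hy ha hb hab
  obtain ⟨C, hC⟩ :=
    (isCompact_Icc (a := (0 : Fin m → ℝ)) (b := 1)).exists_bound_of_continuousOn hcont
  have hgbd : ∀ x, |g x| ≤ C := fun x => by
    rw [← Real.norm_eq_abs]; exact hC _ (hpmem x)
  have hIccμ : μ (Set.Icc (0 : ℝ) 1) = 1 := by
    rw [← prob_compl_eq_zero_iff measurableSet_Icc]; exact hsupp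
  have e1 : ∫ x, f x ∂(Measure.pi fun _ : Fin m => μ)
      = ∫ x, g x ∂(Measure.pi fun _ : Fin m => μ) := by
    refine integral_congr_ae ?_
    filter_upwards [maurer_ae_pi_mem (m := m) μ hIccμ] with x hx
    exact (hgeq x hx).symm
  have e2 : ∫ x, f x ∂(Measure.pi fun _ : Fin m =>
        (ENNReal.ofReal μ₀ • Measure.dirac (1 : ℝ)
          + ENNReal.ofReal (1 - μ₀) • Measure.dirac (0 : ℝ)))
      = ∫ x, g x ∂(Measure.pi fun _ : Fin m =>
        (ENNReal.ofReal μ₀ • Measure.dirac (1 : ℝ)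
          + ENNReal.ofReal (1 - μ₀) • Measure.dirac (0 : ℝ))) := by
    refine integral_congr_ae ?_
    filter_upwards [maurer_ae_pi_mem (m := m) _ (maurer_bern_Icc μ₀ h0 h1)] with x hx
    exact (hgeq x hx).symm
  rw [e1, e2]
  exact maurer_aux μ hsupp μ₀ hmean h0 h1 m g C hgcont hgbd hgconv
end

section
/- (Maurer's exponential moment bound, upper half) Let X₁,…,X_m be i.i.d. Bernoulli random variables with mean μ ∈ [0,1] and m ≥ 8. Then E[ exp( m · kl( (1/m)∑X_i ‖ μ ) ) ] ≤ 2√m, where kl(p‖q) = p ln(p/q) + (1−p) ln((1−p)/(1−q)) is the Bernoulli KL divergence. -/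
open Real Finset Nat

lemma stirling_lower (n : ℕ) (hn : 1 ≤ n) :
    Real.sqrt π * (Real.sqrt (2 * n) * ((n / Real.exp 1) ^ n)) ≤ (n ! : ℝ) := by
  have h : Real.sqrt π ≤ Stirling.stirlingSeq n := by
    obtain ⟨j, rfl⟩ := Nat.exists_eq_add_of_le hn
    have := Stirling.stirlingSeq'_antitone.le_of_tendsto
      (by
        have := Stirling.tendsto_stirlingSeq_sqrt_pi
        exact this.comp (Filter.tendsto_add_atTop_nat 1)) j
    simpa [Function.comp, Nat.succ_eq_add_one, add_comm] using this
  have hpos : 0 < Real.sqrt (2 * n) * ((n : ℝ) / Real.exp 1) ^ n := by positivity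
  have := mul_le_mul_of_nonneg_right h (le_of_lt hpos)
  rw [Stirling.stirlingSeq] at this
  calc Real.sqrt π * (Real.sqrt (2 * n) * ((n:ℝ) / Real.exp 1) ^ n)
      ≤ (n ! : ℝ) / (Real.sqrt (2 * n) * ((n:ℝ) / Real.exp 1) ^ n) *
        (Real.sqrt (2 * n) * ((n:ℝ) / Real.exp 1) ^ n) := by
        rw [← mul_assoc] at this ⊢; exact this
    _ = (n ! : ℝ) := div_mul_cancel₀ _ (ne_of_gt hpos)

lemma stirlingSeq_eight_lt : Stirling.stirlingSeq 8 ≤ 2 * Real.sqrt 2 - 1 := by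
  have h8 : Stirling.stirlingSeq 8 = 40320 / (4 * (8 / Real.exp 1) ^ 8) := by
    rw [Stirling.stirlingSeq]
    norm_num [Nat.factorial]
  rw [h8]
  have hexp : Real.exp 1 ^ 8 < 2.7182818286 ^ 8 := by
    apply pow_lt_pow_left₀ Real.exp_one_lt_d9 (le_of_lt (Real.exp_pos 1))
    norm_num
  have hs2 : (1.414213:ℝ) ≤ Real.sqrt 2 := by
    nlinarith [Real.sq_sqrt (by norm_num : (0:ℝ) ≤ 2), Real.sqrt_nonneg 2]
  have hd : (0:ℝ) < 4 * (8 / Real.exp 1) ^ 8 := by positivity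
  rw [div_le_iff₀ hd]
  have h1 : (8 / Real.exp 1) ^ 8 = 8^8 / Real.exp 1 ^ 8 := div_pow _ _ _
  have hepos : (0:ℝ) < Real.exp 1 ^ 8 := by positivity
  have h2 : (8:ℝ)^8 / 2.7182818286 ^ 8 ≤ 8^8 / Real.exp 1 ^ 8 :=
    div_le_div_of_nonneg_left (by norm_num) (by positivity) (le_of_lt hexp)
  rw [h1]
  nlinarith [hs2, h2]

lemma stirling_upper (m : ℕ) (hm : 8 ≤ m) :
    (m ! : ℝ) ≤ (2 * Real.sqrt 2 - 1) * (Real.sqrt (2 * m) * ((m / Real.exp 1) ^ m)) := by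
  have h : Stirling.stirlingSeq m ≤ 2 * Real.sqrt 2 - 1 := by
    refine le_trans ?_ stirlingSeq_eight_lt
    obtain ⟨j, rfl⟩ := Nat.exists_eq_add_of_le hm
    have := Stirling.stirlingSeq'_antitone (Nat.le_add_right 7 j)
    simpa [Function.comp, Nat.succ_eq_add_one, show 7 + j + 1 = 8 + j by omega] using this
  have hpos : 0 < Real.sqrt (2 * m) * ((m : ℝ) / Real.exp 1) ^ m := by
    have : (0:ℝ) < m := by positivity
    positivity
  have := mul_le_mul_of_nonneg_right h (le_of_lt hpos)
  rw [Stirling.stirlingSeq, div_mul_cancel₀ _ (ne_of_gt hpos)] at this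
  linarith

lemma alg1 (k n : ℕ) (e : ℝ) (he : e ≠ 0) (hM : ((k:ℝ) + n) ≠ 0) :
    (((k:ℝ) + n) / e) ^ (k + n) * (((k:ℝ) / ((k:ℝ) + n)) ^ k * ((n:ℝ) / ((k:ℝ) + n)) ^ n)
      = ((k:ℝ) / e) ^ k * ((n:ℝ) / e) ^ n := by
  have h1 : (((k:ℝ) + n) / e) * ((k:ℝ) / ((k:ℝ) + n)) = (k:ℝ) / e := by
    field_simp [he]
  have h2 : (((k:ℝ) + n) / e) * ((n:ℝ) / ((k:ℝ) + n)) = (n:ℝ) / e := by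
    field_simp [he]
  calc (((k:ℝ) + n) / e) ^ (k + n) * (((k:ℝ) / ((k:ℝ) + n)) ^ k * ((n:ℝ) / ((k:ℝ) + n)) ^ n)
      = ((((k:ℝ) + n) / e) * ((k:ℝ) / ((k:ℝ) + n))) ^ k
        * ((((k:ℝ) + n) / e) * ((n:ℝ) / ((k:ℝ) + n))) ^ n := by
        rw [pow_add, mul_pow, mul_pow]; ring
    _ = ((k:ℝ) / e) ^ k * ((n:ℝ) / e) ^ n := by rw [h1, h2]

lemma choose_term_bound (k n : ℕ) (hk : 1 ≤ k) (hn : 1 ≤ n) (hm : 8 ≤ k + n) :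
    ((k + n).choose k : ℝ) * ((k : ℝ) / (k + n)) ^ k * ((n : ℝ) / (k + n)) ^ n
      ≤ (2 * Real.sqrt 2 - 1) / (π * Real.sqrt 2)
        * (Real.sqrt (k + n) / Real.sqrt ((k : ℝ) * n)) := by
  set e := Real.exp 1 with he
  have hK : (0:ℝ) < k := by exact_mod_cast hk
  have hN : (0:ℝ) < n := by exact_mod_cast hn
  have hM : (0:ℝ) < (k:ℝ) + n := by linarith
  have hMn : ((k:ℝ) + n) ≠ 0 := ne_of_gt hM
  have hchoose : ((k + n).choose k : ℝ) = ((k+n)! : ℝ) / ((k ! : ℝ) * (n ! : ℝ)) := by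
    have h := Nat.choose_mul_factorial_mul_factorial (Nat.le_add_right k n)
    rw [Nat.add_sub_cancel_left] at h
    have : ((k + n).choose k : ℝ) * (k ! : ℝ) * (n ! : ℝ) = ((k+n)! : ℝ) := by
      exact_mod_cast congrArg (Nat.cast : ℕ → ℝ) h
    field_simp [Nat.factorial_ne_zero] at this ⊢
    linarith [this]
  have hup : ((k+n)! : ℝ) ≤ (2 * Real.sqrt 2 - 1) * (Real.sqrt (2 * (k+n)) * ((((k:ℝ)+n) / e) ^ (k+n))) := by
    have := stirling_upper (k+n) hm
    push_cast at this ⊢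
    convert this using 4 <;> push_cast <;> ring
  have hlowk : Real.sqrt π * (Real.sqrt (2 * k) * (((k:ℝ) / e) ^ k)) ≤ (k ! : ℝ) :=
    stirling_lower k hk
  have hlown : Real.sqrt π * (Real.sqrt (2 * n) * (((n:ℝ) / e) ^ n)) ≤ (n ! : ℝ) :=
    stirling_lower n hn
  have hPk : (0:ℝ) < ((k:ℝ) / e) ^ k := by positivity
  have hPn : (0:ℝ) < ((n:ℝ) / e) ^ n := by positivity
  have hA : (0:ℝ) < 2 * Real.sqrt 2 - 1 := by
    nlinarith [Real.sq_sqrt (by norm_num : (0:ℝ) ≤ 2), Real.sqrt_nonneg 2]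
  have hD' : (0:ℝ) < (Real.sqrt π * (Real.sqrt (2 * k) * (((k:ℝ) / e) ^ k)))
      * (Real.sqrt π * (Real.sqrt (2 * n) * (((n:ℝ) / e) ^ n))) := by
    have hπ : (0:ℝ) < π := Real.pi_pos
    positivity
  have hmain : ((k + n).choose k : ℝ) * ((k : ℝ) / ((k:ℝ) + n)) ^ k * ((n : ℝ) / ((k:ℝ) + n)) ^ n
      ≤ ((2 * Real.sqrt 2 - 1) * (Real.sqrt (2 * (k+n)) * ((((k:ℝ)+n) / e) ^ (k+n)))
          * (((k : ℝ) / ((k:ℝ) + n)) ^ k * ((n : ℝ) / ((k:ℝ) + n)) ^ n))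
        / ((Real.sqrt π * (Real.sqrt (2 * k) * (((k:ℝ) / e) ^ k)))
          * (Real.sqrt π * (Real.sqrt (2 * n) * (((n:ℝ) / e) ^ n)))) := by
    rw [hchoose]
    rw [div_mul_eq_mul_div, div_mul_eq_mul_div]
    apply div_le_div₀ (by positivity)
    · have h1 : ((k+n)! : ℝ) * ((k : ℝ) / ((k:ℝ) + n)) ^ k * ((n : ℝ) / ((k:ℝ) + n)) ^ n
          ≤ ((2 * Real.sqrt 2 - 1) * (Real.sqrt (2 * (k+n)) * ((((k:ℝ)+n) / e) ^ (k+n))))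
            * ((k : ℝ) / ((k:ℝ) + n)) ^ k * ((n : ℝ) / ((k:ℝ) + n)) ^ n := by
        have hx : (0:ℝ) ≤ ((k : ℝ) / ((k:ℝ) + n)) ^ k := by positivity
        have hy : (0:ℝ) ≤ ((n : ℝ) / ((k:ℝ) + n)) ^ n := by positivity
        have := mul_le_mul_of_nonneg_right (mul_le_mul_of_nonneg_right hup hx) hy
        convert this using 1 <;> push_cast <;> ring
      calc ((k+n)! : ℝ) * ((k : ℝ) / ((k:ℝ) + n)) ^ k * ((n : ℝ) / ((k:ℝ) + n)) ^ n
          ≤ _ := h1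
        _ = _ := by ring
    · exact hD'
    · exact mul_le_mul hlowk hlown (le_of_lt (by positivity)) (le_of_lt (by positivity))
  refine hmain.trans (le_of_eq ?_)
  have halg : ((((k:ℝ)+n) / e) ^ (k+n)) * (((k : ℝ) / ((k:ℝ) + n)) ^ k * ((n : ℝ) / ((k:ℝ) + n)) ^ n)
      = ((k:ℝ) / e) ^ k * ((n:ℝ) / e) ^ n := alg1 k n e (Real.exp_ne_zero 1) hMn
  have hsπ : Real.sqrt π * Real.sqrt π = π := Real.mul_self_sqrt Real.pi_pos.le
  have hs2 : Real.sqrt 2 * Real.sqrt 2 = 2 := Real.mul_self_sqrt (by norm_num)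
  have h2M : Real.sqrt (2 * ((k:ℝ) + n)) = Real.sqrt 2 * Real.sqrt ((k:ℝ) + n) :=
    Real.sqrt_mul (by norm_num) _
  have h2K : Real.sqrt (2 * (k:ℝ)) = Real.sqrt 2 * Real.sqrt k :=
    Real.sqrt_mul (by norm_num) _
  have h2N : Real.sqrt (2 * (n:ℝ)) = Real.sqrt 2 * Real.sqrt n :=
    Real.sqrt_mul (by norm_num) _
  have hKN : Real.sqrt ((k:ℝ) * n) = Real.sqrt k * Real.sqrt n :=
    Real.sqrt_mul hK.le _
  have hnum : (2 * Real.sqrt 2 - 1) * (Real.sqrt (2 * ((k:ℝ)+n)) * ((((k:ℝ)+n) / e) ^ (k+n)))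
      * (((k : ℝ) / ((k:ℝ) + n)) ^ k * ((n : ℝ) / ((k:ℝ) + n)) ^ n)
      = ((2 * Real.sqrt 2 - 1) * Real.sqrt 2 * Real.sqrt ((k:ℝ)+n))
        * (((k:ℝ) / e) ^ k * ((n:ℝ) / e) ^ n) := by
    rw [h2M]
    calc (2 * Real.sqrt 2 - 1) * (Real.sqrt 2 * Real.sqrt ((k:ℝ)+n) * ((((k:ℝ)+n) / e) ^ (k+n)))
        * (((k : ℝ) / ((k:ℝ) + n)) ^ k * ((n : ℝ) / ((k:ℝ) + n)) ^ n)
        = ((2 * Real.sqrt 2 - 1) * Real.sqrt 2 * Real.sqrt ((k:ℝ)+n))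
          * ((((k:ℝ)+n) / e) ^ (k+n)
            * (((k : ℝ) / ((k:ℝ) + n)) ^ k * ((n : ℝ) / ((k:ℝ) + n)) ^ n)) := by ring
      _ = _ := by rw [halg]
  have hden : (Real.sqrt π * (Real.sqrt (2 * k) * (((k:ℝ) / e) ^ k)))
      * (Real.sqrt π * (Real.sqrt (2 * n) * (((n:ℝ) / e) ^ n)))
      = (π * 2) * (Real.sqrt k * Real.sqrt n * (((k:ℝ) / e) ^ k * ((n:ℝ) / e) ^ n)) := by
    rw [h2K, h2N]
    calc (Real.sqrt π * (Real.sqrt 2 * Real.sqrt k * (((k:ℝ) / e) ^ k)))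
        * (Real.sqrt π * (Real.sqrt 2 * Real.sqrt n * (((n:ℝ) / e) ^ n)))
        = (Real.sqrt π * Real.sqrt π) * ((Real.sqrt 2 * Real.sqrt 2)
          * (Real.sqrt k * Real.sqrt n * (((k:ℝ) / e) ^ k * ((n:ℝ) / e) ^ n))) := by ring
      _ = _ := by rw [hsπ, hs2]; ring
  rw [hnum, hden, hKN]
  have hπ : (0:ℝ) < π := Real.pi_pos
  have hsk : (0:ℝ) < Real.sqrt k := Real.sqrt_pos.2 hK
  have hsn : (0:ℝ) < Real.sqrt n := Real.sqrt_pos.2 hN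
  have hss2 : (0:ℝ) < Real.sqrt 2 := by positivity
  field_simp
  linear_combination hs2

lemma arcsin_step (a b : ℝ) (ha : -1 ≤ a) (hab : a ≤ b) (hb : b ≤ 1) :
    (b - a) / Real.sqrt (1 - ((a + b) / 2) ^ 2) ≤ Real.arcsin b - Real.arcsin a := by
  set θ := Real.arcsin b with hθ
  set ph := Real.arcsin a with hph
  have hθb : Real.sin θ = b := Real.sin_arcsin (by linarith) hb
  have hpha : Real.sin ph = a := Real.sin_arcsin ha (by linarith)
  have hθI : θ ∈ Set.Icc (-(π/2)) (π/2) := Real.arcsin_mem_Icc b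
  have hphI : ph ∈ Set.Icc (-(π/2)) (π/2) := Real.arcsin_mem_Icc a
  have hphθ : ph ≤ θ := Real.monotone_arcsin hab
  set d := (θ - ph) / 2 with hd
  set s := (θ + ph) / 2 with hs
  have hd0 : 0 ≤ d := by simp [hd]; linarith
  have hdle : d ≤ π / 2 := by
    simp only [hd]; obtain ⟨h1, h2⟩ := hθI; obtain ⟨h3, h4⟩ := hphI; linarith
  have hsI : -(π/2) ≤ s ∧ s ≤ π/2 := by
    obtain ⟨h1, h2⟩ := hθI; obtain ⟨h3, h4⟩ := hphI
    constructor <;> simp only [hs] <;> linarith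
  have hcs : 0 ≤ Real.cos s := Real.cos_nonneg_of_mem_Icc ⟨hsI.1, hsI.2⟩
  have hcd : 0 ≤ Real.cos d := Real.cos_nonneg_of_mem_Icc ⟨by linarith [Real.pi_pos], hdle⟩
  have hsd : 0 ≤ Real.sin d := Real.sin_nonneg_of_nonneg_of_le_pi hd0 (by linarith [Real.pi_pos])
  have hba : b - a = 2 * Real.sin d * Real.cos s := by
    rw [← hθb, ← hpha, Real.sin_sub_sin]
  have hu : a + b = 2 * (Real.sin s * Real.cos d) := by
    have h := Real.sin_sub_sin θ (-ph)
    rw [Real.sin_neg, hθb, hpha,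
      show (θ - -ph) / 2 = s by rw [hs]; ring,
      show (θ + -ph) / 2 = d by rw [hd]; ring] at h
    linarith
  have hsc2 : Real.sin s ^ 2 + Real.cos s ^ 2 = 1 := Real.sin_sq_add_cos_sq s
  have hdc2 : Real.sin d ^ 2 + Real.cos d ^ 2 = 1 := Real.sin_sq_add_cos_sq d
  have hu2 : Real.cos s ^ 2 ≤ 1 - ((a + b) / 2) ^ 2 := by
    have h1 : ((a + b) / 2) ^ 2 = Real.sin s ^ 2 * Real.cos d ^ 2 := by
      rw [show (a + b) / 2 = Real.sin s * Real.cos d by linarith]; ring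
    nlinarith [sq_nonneg (Real.sin s), sq_nonneg (Real.sin d), sq_nonneg (Real.sin s * Real.sin d)]
  have hsqrt : Real.cos s ≤ Real.sqrt (1 - ((a + b) / 2) ^ 2) := by
    rw [show Real.cos s = Real.sqrt (Real.cos s ^ 2) by
      rw [Real.sqrt_sq hcs]]
    exact Real.sqrt_le_sqrt hu2
  have hsin_le : Real.sin d ≤ d := Real.sin_le hd0
  rcases eq_or_lt_of_le (Real.sqrt_nonneg (1 - ((a + b) / 2) ^ 2)) with h0 | h0
  · rw [← h0, div_zero]
    linarith
  · rw [div_le_iff₀ h0]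
    have h2d : θ - ph = 2 * d := by rw [hd]; ring
    calc b - a = 2 * Real.sin d * Real.cos s := hba
      _ ≤ 2 * d * Real.cos s := by nlinarith
      _ ≤ 2 * d * Real.sqrt (1 - ((a + b) / 2) ^ 2) := by nlinarith
      _ = (θ - ph) * Real.sqrt (1 - ((a + b) / 2) ^ 2) := by rw [h2d]

lemma step_bound (m k : ℕ) (hk : 1 ≤ k) (hkm : k < m) :
    1 / Real.sqrt ((k:ℝ) * ((m:ℝ) - k))
      ≤ Real.arcsin ((2*k+1-(m:ℝ))/m) - Real.arcsin ((2*k-1-(m:ℝ))/m) := by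
  have hK : (1:ℝ) ≤ k := by exact_mod_cast hk
  have hKM : (k:ℝ) + 1 ≤ m := by exact_mod_cast hkm
  have hM : (0:ℝ) < m := by linarith
  set a : ℝ := (2*k-1-(m:ℝ))/m with ha
  set b : ℝ := (2*k+1-(m:ℝ))/m with hb
  have ha1 : -1 ≤ a := by rw [ha, le_div_iff₀ hM]; linarith
  have hab : a ≤ b := by rw [ha, hb, div_le_div_iff₀ hM hM]; nlinarith
  have hb1 : b ≤ 1 := by rw [hb, div_le_iff₀ hM]; linarith
  have hZ : (0:ℝ) < (k:ℝ) * ((m:ℝ) - k) := by nlinarith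
  have hmain := arcsin_step a b ha1 hab hb1
  have hba : b - a = 2 / m := by rw [ha, hb]; field_simp; ring
  have huu : 1 - ((a + b)/2)^2 = (2/m)^2 * ((k:ℝ) * ((m:ℝ) - k)) := by
    rw [ha, hb]; field_simp; ring
  have hsq : Real.sqrt (1 - ((a + b)/2)^2) = (2/m) * Real.sqrt ((k:ℝ) * ((m:ℝ) - k)) := by
    rw [huu, Real.sqrt_mul (sq_nonneg _), Real.sqrt_sq (by positivity : (0:ℝ) ≤ 2/m)]
  rw [hba, hsq] at hmain
  refine le_trans (le_of_eq ?_) hmain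
  have hsz : Real.sqrt ((k:ℝ)*((m:ℝ)-k)) ≠ 0 := by positivity
  have hm0 : (m:ℝ) ≠ 0 := ne_of_gt hM
  field_simp

lemma sum_inv_sqrt (m : ℕ) :
    ∑ k ∈ Finset.Ico 1 m, 1 / Real.sqrt ((k:ℝ) * ((m:ℝ) - k)) ≤ π := by
  rcases Nat.lt_or_ge m 1 with h | h
  · interval_cases m
    simp [Real.pi_pos.le]
  set G : ℕ → ℝ := fun i => Real.arcsin ((2*i+1-(m:ℝ))/m) with hG
  have hstep : ∀ i ∈ Finset.range (m - 1),
      1 / Real.sqrt ((↑(1+i):ℝ) * ((m:ℝ) - ↑(1+i))) ≤ G (i+1) - G i := by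
    intro i hi
    rw [Finset.mem_range] at hi
    have := step_bound m (1+i) (Nat.le_add_right 1 i) (by omega)
    refine this.trans (le_of_eq ?_)
    rw [hG]
    push_cast
    ring_nf
  calc ∑ k ∈ Finset.Ico 1 m, 1 / Real.sqrt ((k:ℝ) * ((m:ℝ) - k))
      = ∑ i ∈ Finset.range (m - 1), 1 / Real.sqrt ((↑(1+i):ℝ) * ((m:ℝ) - ↑(1+i))) := by
        rw [Finset.sum_Ico_eq_sum_range]
    _ ≤ ∑ i ∈ Finset.range (m - 1), (G (i+1) - G i) := Finset.sum_le_sum hstep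
    _ = G (m-1) - G 0 := Finset.sum_range_sub G (m-1)
    _ ≤ π/2 - (-(π/2)) := by
        refine sub_le_sub (Real.arcsin_le_pi_div_two _) (Real.neg_pi_div_two_le_arcsin _)
    _ = π := by ring

lemma middle_term_eq (m k : ℕ) (μ : ℝ) (hμ0 : 0 < μ) (hμ1 : μ < 1)
    (hk : 1 ≤ k) (hkm : k < m) :
    (m.choose k : ℝ) * μ ^ k * (1 - μ) ^ (m - k) *
      Real.exp (m * ((k / m : ℝ) * Real.log ((k / m : ℝ) / μ)
        + (1 - (k / m : ℝ)) * Real.log ((1 - (k / m : ℝ)) / (1 - μ))))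
    = (m.choose k : ℝ) * ((k:ℝ)/m) ^ k * (((m:ℝ)-k)/m) ^ (m-k) := by
  have hM : (0:ℝ) < m := by exact_mod_cast (by omega : 0 < m)
  have hK : (0:ℝ) < k := by exact_mod_cast hk
  have hKM : (k:ℝ) < m := by exact_mod_cast hkm
  have hμ1' : (0:ℝ) < 1 - μ := by linarith
  set p : ℝ := (k:ℝ)/m with hp
  have hp0 : 0 < p := by positivity
  have hp1 : 0 < 1 - p := by rw [hp]; rw [sub_pos, div_lt_one hM]; exact hKM
  have hcast : ((m-k:ℕ):ℝ) = (m:ℝ) - k := by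
    rw [Nat.cast_sub hkm.le]
  have e1 : (m:ℝ) * (p * Real.log (p/μ) + (1-p) * Real.log ((1-p)/(1-μ)))
      = (k:ℝ) * Real.log (p/μ) + ((m-k:ℕ):ℝ) * Real.log ((1-p)/(1-μ)) := by
    rw [hcast, hp]
    field_simp
  rw [e1, Real.exp_add, Real.exp_nat_mul, Real.exp_nat_mul,
    Real.exp_log (by positivity : (0:ℝ) < p/μ),
    Real.exp_log (by positivity : (0:ℝ) < (1-p)/(1-μ))]
  have h1 : μ ^ k * (p/μ) ^ k = p ^ k := by
    rw [← mul_pow, mul_div_cancel₀ _ (ne_of_gt hμ0)]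
  have h2 : (1-μ) ^ (m-k) * ((1-p)/(1-μ)) ^ (m-k) = (1-p) ^ (m-k) := by
    rw [← mul_pow, mul_div_cancel₀ _ (ne_of_gt hμ1')]
  have h3 : 1 - p = ((m:ℝ)-k)/m := by rw [hp]; field_simp
  calc (m.choose k : ℝ) * μ ^ k * (1 - μ) ^ (m - k) * ((p/μ) ^ k * ((1-p)/(1-μ)) ^ (m-k))
      = (m.choose k : ℝ) * (μ ^ k * (p/μ) ^ k) * ((1-μ) ^ (m-k) * ((1-p)/(1-μ)) ^ (m-k)) := by
        ring
    _ = (m.choose k : ℝ) * p ^ k * (1-p) ^ (m-k) := by rw [h1, h2]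
    _ = (m.choose k : ℝ) * ((k:ℝ)/m) ^ k * (((m:ℝ)-k)/m) ^ (m-k) := by rw [← h3, hp]


/-- Maurer's exponential moment bound (upper half): for `X₁,…,X_m` i.i.d.
Bernoulli(μ) with `m ≥ 8`, `E[exp(m·kl((1/m)∑Xᵢ ‖ μ))] ≤ 2√m`, written out as
a sum over the binomial distribution, with
`kl(p‖q) = p ln(p/q) + (1-p) ln((1-p)/(1-q))`. -/
theorem maurer_exp_moment_bound (m : ℕ) (hm : 8 ≤ m) (μ : ℝ)
    (hμ0 : 0 ≤ μ) (hμ1 : μ ≤ 1) :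
    ∑ k ∈ Finset.range (m + 1),
      (m.choose k : ℝ) * μ ^ k * (1 - μ) ^ (m - k) *
        Real.exp (m * ((k / m : ℝ) * Real.log ((k / m : ℝ) / μ)
          + (1 - (k / m : ℝ)) * Real.log ((1 - (k / m : ℝ)) / (1 - μ))))
      ≤ 2 * Real.sqrt m := by
  have hm0 : 0 < m := by omega
  have hM : (0:ℝ) < m := by exact_mod_cast hm0
  have hs2 : Real.sqrt 2 * Real.sqrt 2 = 2 := Real.mul_self_sqrt (by norm_num)
  have hss2 : (0:ℝ) < Real.sqrt 2 := Real.sqrt_pos.2 (by norm_num)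
  have hsm : 2 * Real.sqrt 2 ≤ Real.sqrt m := by
    have h8 : Real.sqrt 8 ≤ Real.sqrt m := Real.sqrt_le_sqrt (by exact_mod_cast hm)
    have h82 : Real.sqrt 8 = 2 * Real.sqrt 2 := by
      rw [show (8:ℝ) = 2^2 * 2 by norm_num, Real.sqrt_mul (by positivity),
        Real.sqrt_sq (by norm_num : (0:ℝ) ≤ 2)]
    linarith
  have hone : (1:ℝ) ≤ 2 * Real.sqrt m := by nlinarith
  rcases eq_or_lt_of_le hμ0 with hμz | hμpos
  · have hsum : ∑ k ∈ Finset.range (m + 1),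
        (m.choose k : ℝ) * μ ^ k * (1 - μ) ^ (m - k) *
          Real.exp (m * ((k / m : ℝ) * Real.log ((k / m : ℝ) / μ)
            + (1 - (k / m : ℝ)) * Real.log ((1 - (k / m : ℝ)) / (1 - μ)))) = 1 := by
      rw [Finset.sum_eq_single_of_mem 0 (by simp)]
      · simp [← hμz]
      · intro b _ hbne
        rw [← hμz]
        simp [zero_pow hbne]
    rw [hsum]; exact hone
  rcases eq_or_lt_of_le hμ1 with hμo | hμlt
  · have hsum : ∑ k ∈ Finset.range (m + 1),
        (m.choose k : ℝ) * μ ^ k * (1 - μ) ^ (m - k) *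
          Real.exp (m * ((k / m : ℝ) * Real.log ((k / m : ℝ) / μ)
            + (1 - (k / m : ℝ)) * Real.log ((1 - (k / m : ℝ)) / (1 - μ)))) = 1 := by
      rw [Finset.sum_eq_single_of_mem m (by simp)]
      · rw [hμo]
        simp [div_self (ne_of_gt hM), Nat.choose_self]
      · intro b hb hbne
        rw [hμo]
        have hmb : m - b ≠ 0 := by rw [Finset.mem_range] at hb; omega
        simp [zero_pow hmb]
    rw [hsum]; exact hone
  · -- main case 0 < μ < 1
    have f0 : (m.choose 0 : ℝ) * μ ^ 0 * (1 - μ) ^ (m - 0) *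
        Real.exp (m * (((0:ℕ) / m : ℝ) * Real.log (((0:ℕ) / m : ℝ) / μ)
          + (1 - ((0:ℕ) / m : ℝ)) * Real.log ((1 - ((0:ℕ) / m : ℝ)) / (1 - μ)))) = 1 := by
      have h1μ : (0:ℝ) < 1 - μ := by linarith
      simp only [Nat.choose_zero_right, Nat.cast_one, pow_zero, Nat.sub_zero, Nat.cast_zero,
        zero_div, zero_mul, sub_zero, zero_add, one_mul, one_div, Real.log_inv]
      rw [mul_neg, Real.exp_neg, Real.exp_nat_mul, Real.exp_log h1μ]
      field_simp
    have fm : (m.choose m : ℝ) * μ ^ m * (1 - μ) ^ (m - m) *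
        Real.exp (m * (((m:ℕ) / m : ℝ) * Real.log (((m:ℕ) / m : ℝ) / μ)
          + (1 - ((m:ℕ) / m : ℝ)) * Real.log ((1 - ((m:ℕ) / m : ℝ)) / (1 - μ)))) = 1 := by
      rw [div_self (ne_of_gt hM)]
      simp only [Nat.choose_self, Nat.cast_one, Nat.sub_self, pow_zero, sub_self, zero_mul,
        add_zero, one_mul, one_div, Real.log_inv, mul_one]
      rw [mul_neg, Real.exp_neg, Real.exp_nat_mul, Real.exp_log hμpos]
      field_simp
    set C : ℝ := (2 * Real.sqrt 2 - 1) / (π * Real.sqrt 2) with hC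
    have hCpos : 0 ≤ C := by
      rw [hC]
      have hA : (0:ℝ) < 2 * Real.sqrt 2 - 1 := by nlinarith
      positivity
    have hmid : ∀ k ∈ Finset.Ico 1 m,
        (m.choose k : ℝ) * μ ^ k * (1 - μ) ^ (m - k) *
          Real.exp (m * ((k / m : ℝ) * Real.log ((k / m : ℝ) / μ)
            + (1 - (k / m : ℝ)) * Real.log ((1 - (k / m : ℝ)) / (1 - μ))))
        ≤ (C * Real.sqrt m) * (1 / Real.sqrt ((k:ℝ) * ((m:ℝ) - k))) := by
      intro k hk
      rw [Finset.mem_Ico] at hk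
      rw [middle_term_eq m k μ hμpos hμlt hk.1 hk.2]
      have hb := choose_term_bound k (m-k) hk.1 (by omega) (by omega)
      rw [show k + (m-k) = m from by omega] at hb
      have hc2 : ((k:ℝ) + ((m-k:ℕ):ℝ)) = (m:ℝ) := by
        rw [Nat.cast_sub (le_of_lt hk.2)]; ring
      have hcast : ((m-k:ℕ):ℝ) = (m:ℝ) - k := Nat.cast_sub (le_of_lt hk.2)
      rw [hc2, hcast] at hb
      refine hb.trans (le_of_eq ?_)
      rw [hC]; ring
    calc ∑ k ∈ Finset.range (m + 1),
        (m.choose k : ℝ) * μ ^ k * (1 - μ) ^ (m - k) *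
          Real.exp (m * ((k / m : ℝ) * Real.log ((k / m : ℝ) / μ)
            + (1 - (k / m : ℝ)) * Real.log ((1 - (k / m : ℝ)) / (1 - μ))))
        = (∑ k ∈ Finset.Ico 0 m,
            (m.choose k : ℝ) * μ ^ k * (1 - μ) ^ (m - k) *
              Real.exp (m * ((k / m : ℝ) * Real.log ((k / m : ℝ) / μ)
                + (1 - (k / m : ℝ)) * Real.log ((1 - (k / m : ℝ)) / (1 - μ))))) + 1 := by
          rw [Finset.sum_range_succ, fm, Finset.range_eq_Ico]
      _ = 1 + (∑ k ∈ Finset.Ico 1 m,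
            (m.choose k : ℝ) * μ ^ k * (1 - μ) ^ (m - k) *
              Real.exp (m * ((k / m : ℝ) * Real.log ((k / m : ℝ) / μ)
                + (1 - (k / m : ℝ)) * Real.log ((1 - (k / m : ℝ)) / (1 - μ))))) + 1 := by
          rw [Finset.sum_eq_sum_Ico_succ_bot hm0, f0]
      _ ≤ 1 + (∑ k ∈ Finset.Ico 1 m,
            (C * Real.sqrt m) * (1 / Real.sqrt ((k:ℝ) * ((m:ℝ) - k)))) + 1 := by
          have := Finset.sum_le_sum hmid
          linarith
      _ = 2 + (C * Real.sqrt m) *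
            (∑ k ∈ Finset.Ico 1 m, 1 / Real.sqrt ((k:ℝ) * ((m:ℝ) - k))) := by
          rw [Finset.mul_sum]; ring
      _ ≤ 2 + (C * Real.sqrt m) * π := by
          have hsum := sum_inv_sqrt m
          have hnn : 0 ≤ C * Real.sqrt m := by positivity
          nlinarith [mul_le_mul_of_nonneg_left hsum hnn]
      _ ≤ 2 * Real.sqrt m := by
          have hCπ : C * Real.sqrt m * π = (2 * Real.sqrt 2 - 1) / Real.sqrt 2 * Real.sqrt m := by
            rw [hC]
            field_simp
          rw [hCπ]
          have hfrac : (2 * Real.sqrt 2 - 1) / Real.sqrt 2 = 2 - Real.sqrt 2 / 2 := by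
            rw [div_eq_iff (ne_of_gt hss2)]
            linear_combination (1/2) * hs2
          rw [hfrac]
          nlinarith [hsm, hss2, hs2]
end
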